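/- arXiv:2003.12414 — 7 statements merged into one kernel-verified Lean document; each statement's English description precedes it below -/
import Mathlib

section
/- Let σ_{(z,z+1)} be the swap of positions z and z+1 on configurations η: ℤ → ℤ ∪ {+∞}, and let W_{(z,z+1)} be the totally asymmetric swap operator that applies σ_{(z,z+1)} if η(z) < η(z+1) and does nothing otherwise. Then for the identity bijection id: ℤ → ℤ viewed as a configuration, and for any k ∈ ℕ and integers z_1, …, z_k, one has W_{(z_k,z_k+1)} ⋯ W_{(z_1,z_1+1)} id = inv(W_{(z_1,z_1+1)} ⋯ W_{(z_k,z_k+1)} id), where inv denotes the inverse in the group of bijections ℤ → ℤ. -/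
/-- The totally asymmetric swap operator on bijections `ℤ → ℤ`:
swap the values at positions `z` and `z+1` if `η z < η (z+1)`, else do nothing. -/
noncomputable def tasepW (z : ℤ) (η : Equiv.Perm ℤ) : Equiv.Perm ℤ :=
  if η z < η (z + 1) then (Equiv.swap z (z + 1)).trans η else η

noncomputable def tasepU (w : ℤ) (η : Equiv.Perm ℤ) : Equiv.Perm ℤ :=
  if η⁻¹ w < η⁻¹ (w + 1) then η.trans (Equiv.swap w (w + 1)) else η

lemma special_eq (z w : ℤ) (ξ : Equiv.Perm ℤ) (hw : ξ z = w) (hw1 : ξ (z+1) = w+1) :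
    (Equiv.swap z (z+1)).trans ξ = ξ.trans (Equiv.swap w (w+1)) := by
  ext x
  show ξ (Equiv.swap z (z+1) x) = Equiv.swap w (w+1) (ξ x)
  rcases eq_or_ne x z with rfl | hxz
  · rw [Equiv.swap_apply_left, hw1, hw, Equiv.swap_apply_left]
  rcases eq_or_ne x (z+1) with rfl | hxz1
  · rw [Equiv.swap_apply_right, hw, hw1, Equiv.swap_apply_right]
  · rw [Equiv.swap_apply_of_ne_of_ne hxz hxz1,
      Equiv.swap_apply_of_ne_of_ne (fun h => hxz (ξ.injective (h.trans hw.symm)))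
        (fun h => hxz1 (ξ.injective (h.trans hw1.symm)))]

lemma tasep_comm (z w : ℤ) (ξ : Equiv.Perm ℤ) :
    tasepU w (tasepW z ξ) = tasepW z (tasepU w ξ) := by
  have hab : ξ z ≠ ξ (z+1) := ξ.injective.ne (by omega)
  have hpq : ξ⁻¹ w ≠ ξ⁻¹ (w+1) := (ξ⁻¹ : Equiv.Perm ℤ).injective.ne (by omega)
  have h1 : ξ⁻¹ w = z ↔ ξ z = w := by
    constructor <;> intro h <;> simp [← h]
  have h2 : ξ⁻¹ (w+1) = z+1 ↔ ξ (z+1) = w+1 := by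
    constructor <;> intro h <;> simp [← h]
  have h3 : ξ⁻¹ w = z+1 ↔ ξ (z+1) = w := by
    constructor <;> intro h <;> simp [← h]
  have h4 : ξ⁻¹ (w+1) = z ↔ ξ z = w+1 := by
    constructor <;> intro h <;> simp [← h]
  have hsw : ∀ x, Equiv.swap z (z+1) x = if x = z then z+1 else if x = z+1 then z else x :=
    fun x => by rw [Equiv.swap_apply_def]
  have htw : ∀ x, Equiv.swap w (w+1) x = if x = w then w+1 else if x = w+1 then w else x :=
    fun x => by rw [Equiv.swap_apply_def]
  have hinv : ∀ x, ((Equiv.swap z (z+1)).trans ξ)⁻¹ x = Equiv.swap z (z+1) (ξ⁻¹ x) := by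
    intro x
    show ((ξ : Equiv.Perm ℤ) * Equiv.swap z (z+1))⁻¹ x = _
    rw [mul_inv_rev, Equiv.swap_inv]
    rfl
  have huinv : ∀ x, (ξ.trans (Equiv.swap w (w+1)))⁻¹ x = ξ⁻¹ (Equiv.swap w (w+1) x) := by
    intro x
    show ((Equiv.swap w (w+1) : Equiv.Perm ℤ) * ξ)⁻¹ x = _
    rw [mul_inv_rev, Equiv.swap_inv]
    rfl
  have happ : ∀ x, (ξ.trans (Equiv.swap w (w+1))) x = Equiv.swap w (w+1) (ξ x) := fun _ => rfl
  have happ2 : ∀ x, ((Equiv.swap z (z+1)).trans ξ) x = ξ (Equiv.swap z (z+1) x) := fun _ => rfl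
  unfold tasepW tasepU
  by_cases hA : ξ z < ξ (z+1) <;> by_cases hB : ξ⁻¹ w < ξ⁻¹ (w+1)
  · -- both conditions true
    simp only [hA, hB, if_true, hinv, huinv, happ, happ2]
    by_cases hS : ξ z = w ∧ ξ (z+1) = w+1
    · have c1 : ¬ (Equiv.swap z (z+1) (ξ⁻¹ w) < Equiv.swap z (z+1) (ξ⁻¹ (w+1))) := by
        rw [hsw, hsw]; split_ifs <;> omega
      have c2 : ¬ (Equiv.swap w (w+1) (ξ z) < Equiv.swap w (w+1) (ξ (z+1))) := by
        rw [htw, htw]; split_ifs <;> omega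
      rw [if_neg c1, if_neg c2]
      exact special_eq z w ξ hS.1 hS.2
    · have c1 : Equiv.swap z (z+1) (ξ⁻¹ w) < Equiv.swap z (z+1) (ξ⁻¹ (w+1)) := by
        rw [hsw, hsw]; split_ifs <;> omega
      have c2 : Equiv.swap w (w+1) (ξ z) < Equiv.swap w (w+1) (ξ (z+1)) := by
        rw [htw, htw]; split_ifs <;> omega
      rw [if_pos c1, if_pos c2, Equiv.trans_assoc]
  · -- hA true, hB false
    simp only [hA, hB, if_true, if_false, hinv, huinv, happ, happ2]
    have c1 : ¬ (Equiv.swap z (z+1) (ξ⁻¹ w) < Equiv.swap z (z+1) (ξ⁻¹ (w+1))) := by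
      rw [hsw, hsw]; split_ifs <;> omega
    rw [if_neg c1]
  · -- hA false, hB true
    simp only [hA, hB, if_true, if_false, hinv, huinv, happ, happ2]
    have c2 : ¬ (Equiv.swap w (w+1) (ξ z) < Equiv.swap w (w+1) (ξ (z+1))) := by
      rw [htw, htw]; split_ifs <;> omega
    rw [if_neg c2]
  · simp only [hA, hB, if_false]

lemma tasepW_inv (z : ℤ) (η : Equiv.Perm ℤ) : (tasepW z η)⁻¹ = tasepU z η⁻¹ := by
  unfold tasepW tasepU
  simp only [inv_inv]
  split_ifs with h
  · show ((η : Equiv.Perm ℤ) * Equiv.swap z (z+1))⁻¹ = Equiv.swap z (z+1) * η⁻¹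
    rw [mul_inv_rev, Equiv.swap_inv]
  · rfl

lemma foldl_inv (zs : List ℤ) (η : Equiv.Perm ℤ) :
    (zs.foldl (fun η z => tasepW z η) η)⁻¹ = zs.foldl (fun η z => tasepU z η) η⁻¹ := by
  induction zs generalizing η with
  | nil => rfl
  | cons z t ih => simp only [List.foldl_cons, ih, tasepW_inv]

lemma foldl_comm (z : ℤ) (zs : List ℤ) (ξ : Equiv.Perm ℤ) :
    tasepW z (zs.foldl (fun η w => tasepU w η) ξ)
      = zs.foldl (fun η w => tasepU w η) (tasepW z ξ) := by
  induction zs generalizing ξ with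
  | nil => rfl
  | cons w t ih => simp only [List.foldl_cons, ih, tasep_comm]

lemma tasepW_one (z : ℤ) : tasepW z 1 = Equiv.swap z (z+1) := by
  rw [tasepW]
  rw [if_pos (show (1 : Equiv.Perm ℤ) z < (1 : Equiv.Perm ℤ) (z+1) from lt_add_one z)]
  ext x; rfl

lemma tasepU_one (w : ℤ) : tasepU w 1 = Equiv.swap w (w+1) := by
  rw [tasepU, inv_one]
  rw [if_pos (show (1 : Equiv.Perm ℤ) w < (1 : Equiv.Perm ℤ) (w+1) from lt_add_one w)]
  ext x; rfl

lemma foldl_U_rev (zs : List ℤ) :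
    zs.foldl (fun η w => tasepU w η) 1 = zs.reverse.foldl (fun η z => tasepW z η) 1 := by
  induction zs with
  | nil => rfl
  | cons z t ih =>
    rw [List.reverse_cons, List.foldl_append, ← ih, List.foldl_cons]
    show List.foldl (fun η w => tasepU w η) (tasepU z 1) t
      = tasepW z (List.foldl (fun η w => tasepU w η) 1 t)
    rw [foldl_comm, tasepW_one, tasepU_one]

/-- Color-position symmetry (Lemma 2.1 of Angel–Holroyd–Romik):
`W_{(z_k,z_k+1)} ⋯ W_{(z_1,z_1+1)} id = inv (W_{(z_1,z_1+1)} ⋯ W_{(z_k,z_k+1)} id)`. -/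
theorem tasep_color_position_symmetry (zs : List ℤ) :
    zs.foldl (fun η z => tasepW z η) 1
      = (zs.reverse.foldl (fun η z => tasepW z η) 1)⁻¹ := by
  have h2 := foldl_inv zs 1
  rw [inv_one] at h2
  rw [← foldl_U_rev, ← h2, inv_inv]
end

section
/- Let η: ℤ → ℤ be a bijection and let s_1, …, s_m be adjacent transpositions forming a reduced word for the order-reversing permutation of the interval {−M₋, …, M₊}. Then the configuration W_{s_m} ⋯ W_{s_1} η agrees with η outside {−M₋, …, M₊}, and on {−M₋, …, M₊} its values are the values {η(i) : −M₋ ≤ i ≤ M₊} sorted in decreasing order. In particular (W_{s_m} ⋯ W_{s_1} η)(−M₋) = max_{−M₋ ≤ i ≤ M₊} η(i) and (W_{s_m} ⋯ W_{s_1} η)(M₊) = min_{−M₋ ≤ i ≤ M₊} η(i). -/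
/-- `W_{s_m} ⋯ W_{s_1} η` where `s_1` is applied first. -/
noncomputable def tasepWword (ss : List ℤ) (η : Equiv.Perm ℤ) : Equiv.Perm ℤ :=
  ss.foldl (fun a z => tasepW z a) η

namespace TasepAux

/-- right multiplication word product (matches `hword`'s foldl). -/
def Fw (L : List ℤ) (σ : Equiv.Perm ℤ) : Equiv.Perm ℤ :=
  L.foldl (fun σ z => σ.trans (Equiv.swap z (z + 1))) σ

lemma Fw_nil (σ : Equiv.Perm ℤ) : Fw [] σ = σ := rfl

lemma Fw_cons (z : ℤ) (L : List ℤ) (σ : Equiv.Perm ℤ) :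
    Fw (z :: L) σ = Fw L (σ.trans (Equiv.swap z (z + 1))) := rfl

/-- inversion set -/
def InvSet (σ : Equiv.Perm ℤ) : Set (ℤ × ℤ) := {p | p.1 < p.2 ∧ σ p.2 < σ p.1}

lemma InvSet_one : InvSet 1 = ∅ := by
  ext ⟨i, j⟩; simp [InvSet]; omega

lemma InvSet_step (σ : Equiv.Perm ℤ) (z : ℤ) :
    InvSet (σ.trans (Equiv.swap z (z + 1))) =
      if σ⁻¹ z < σ⁻¹ (z + 1) then insert (σ⁻¹ z, σ⁻¹ (z + 1)) (InvSet σ)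
      else InvSet σ \ {(σ⁻¹ (z + 1), σ⁻¹ z)} := by
  have hinv : ∀ x y : ℤ, σ⁻¹ x = y ↔ x = σ y := by
    intro x y; rw [Equiv.Perm.inv_def, Equiv.symm_apply_eq]
  split_ifs with hlt
  · ext ⟨i, j⟩
    simp only [InvSet, Set.mem_insert_iff, Set.mem_setOf_eq, Equiv.trans_apply,
      Equiv.swap_apply_def, Prod.mk.injEq]
    have h1 := hinv z i
    have h2 := hinv (z+1) j
    have h3 := hinv z j
    have h4 := hinv (z+1) i
    have e1 : σ (σ⁻¹ z) = z := by simp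
    have e2 : σ (σ⁻¹ (z+1)) = z + 1 := by simp
    have hij : σ i = σ j ↔ i = j := by
      constructor <;> intro h <;> [exact σ.injective h; rw [h]]
    split_ifs <;> omega
  · ext ⟨i, j⟩
    simp only [InvSet, Set.mem_diff, Set.mem_setOf_eq, Set.mem_singleton_iff,
      Equiv.trans_apply, Equiv.swap_apply_def, Prod.mk.injEq]
    have h1 := hinv z i
    have h2 := hinv (z+1) j
    have h3 := hinv z j
    have h4 := hinv (z+1) i
    have e1 : σ (σ⁻¹ z) = z := by simp
    have e2 : σ (σ⁻¹ (z+1)) = z + 1 := by simp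
    have hij : σ i = σ j ↔ i = j := by
      constructor <;> intro h <;> [exact σ.injective h; rw [h]]
    split_ifs <;> omega

end TasepAux

namespace TasepAux

lemma InvSet_step_finite (σ : Equiv.Perm ℤ) (z : ℤ) (h : (InvSet σ).Finite) :
    (InvSet (σ.trans (Equiv.swap z (z + 1)))).Finite := by
  rw [InvSet_step]
  split_ifs
  · exact h.insert _
  · exact h.diff

/-- all steps are ascents (length goes up each time) -/
def AllAsc : Equiv.Perm ℤ → List ℤ → Prop
  | _, [] => True
  | σ, z :: L => σ⁻¹ z < σ⁻¹ (z + 1) ∧ AllAsc (σ.trans (Equiv.swap z (z + 1))) L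

lemma counting (L : List ℤ) (σ : Equiv.Perm ℤ) (h : (InvSet σ).Finite) :
    (InvSet (Fw L σ)).Finite ∧
    (InvSet (Fw L σ)).ncard ≤ (InvSet σ).ncard + L.length ∧
    ((InvSet (Fw L σ)).ncard = (InvSet σ).ncard + L.length → AllAsc σ L) := by
  induction L generalizing σ with
  | nil => exact ⟨h, by simp [Fw_nil], fun _ => trivial⟩
  | cons z L ih =>
    have h' := InvSet_step_finite σ z h
    obtain ⟨hf, hle, heq⟩ := ih (σ.trans (Equiv.swap z (z + 1))) h'
    rw [Fw_cons]
    have hub : (InvSet (σ.trans (Equiv.swap z (z + 1)))).ncard ≤ (InvSet σ).ncard + 1 := by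
      rcases lt_or_ge (σ⁻¹ z) (σ⁻¹ (z + 1)) with hlt | hge
      · rw [InvSet_step, if_pos hlt]
        exact Set.ncard_insert_le _ _
      · rw [InvSet_step, if_neg (by omega)]
        exact le_trans (Set.ncard_le_ncard Set.diff_subset h) (by omega)
    refine ⟨hf, ?_, ?_⟩
    · simp only [List.length_cons]
      omega
    · intro hcard
      rcases lt_or_ge (σ⁻¹ z) (σ⁻¹ (z + 1)) with hlt | hge
      · have hmem : (σ⁻¹ z, σ⁻¹ (z + 1)) ∉ InvSet σ := by
          simp only [InvSet, Set.mem_setOf_eq, not_and]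
          intro _; simp
        have hstep : (InvSet (σ.trans (Equiv.swap z (z + 1)))).ncard = (InvSet σ).ncard + 1 := by
          rw [InvSet_step, if_pos hlt, Set.ncard_insert_of_notMem hmem h]
        exact ⟨hlt, heq (by simp at hcard ⊢; omega)⟩
      · exfalso
        have hstep : (InvSet (σ.trans (Equiv.swap z (z + 1)))).ncard ≤ (InvSet σ).ncard := by
          rw [InvSet_step, if_neg (by omega)]
          exact Set.ncard_le_ncard Set.diff_subset h
        simp at hcard; omega

lemma allAsc_mono (L : List ℤ) (σ : Equiv.Perm ℤ) (h : AllAsc σ L) :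
    InvSet σ ⊆ InvSet (Fw L σ) := by
  induction L generalizing σ with
  | nil => exact subset_refl _
  | cons z L ih =>
    obtain ⟨hlt, h'⟩ := h
    rw [Fw_cons]
    refine subset_trans ?_ (ih _ h')
    rw [InvSet_step, if_pos hlt]
    exact Set.subset_insert _ _

end TasepAux

namespace TasepAux

lemma tasepWword_cons (z : ℤ) (L : List ℤ) (η : Equiv.Perm ℤ) :
    tasepWword (z :: L) η = tasepWword L (tasepW z η) := rfl

lemma swap_image_Icc (lo hi z : ℤ) (hz : lo ≤ z) (hz1 : z + 1 ≤ hi) :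
    (Equiv.swap z (z + 1)) '' Set.Icc lo hi = Set.Icc lo hi := by
  ext x
  rw [Equiv.image_eq_preimage_symm]
  simp only [Equiv.symm_swap, Set.mem_preimage, Set.mem_Icc, Equiv.swap_apply_def]
  split_ifs <;> omega

lemma fix_symm (σ : Equiv.Perm ℤ) (j : ℤ) (h : σ j = j) : σ⁻¹ j = j :=
  σ.injective (by simp [h])

lemma main (lo hi : ℤ) (L : List ℤ) (σ η : Equiv.Perm ℤ)
    (hAsc : AllAsc σ L)
    (hsub : ∀ p ∈ InvSet (Fw L σ), lo ≤ p.1 ∧ p.2 ≤ hi)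
    (hfix : ∀ j, j < lo ∨ hi < j → σ j = j)
    (hinv : ∀ i j : ℤ, i < j → σ⁻¹ j < σ⁻¹ i → η j < η i) :
    (∀ j, j < lo ∨ hi < j → tasepWword L η j = η j) ∧
    (∀ i j : ℤ, i < j → (Fw L σ)⁻¹ j < (Fw L σ)⁻¹ i →
        tasepWword L η j < tasepWword L η i) ∧
    (tasepWword L η '' Set.Icc lo hi = η '' Set.Icc lo hi) := by
  induction L generalizing σ η with
  | nil => exact ⟨fun _ _ => rfl, hinv, rfl⟩
  | cons z L ih =>
    obtain ⟨hlt, hAsc'⟩ := hAsc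
    set s := Equiv.swap z (z + 1) with hs
    set σ' := σ.trans s with hσ'
    -- the inserted inversion pair lies in the final inversion set
    have hpair : (σ⁻¹ z, σ⁻¹ (z + 1)) ∈ InvSet (Fw (z :: L) σ) := by
      rw [Fw_cons]
      apply allAsc_mono L σ' hAsc'
      rw [hσ', InvSet_step, if_pos hlt]
      exact Set.mem_insert _ _
    have hbound := hsub _ hpair
    -- z and z+1 lie in [lo, hi]
    have hz : lo ≤ z ∧ z + 1 ≤ hi := by
      constructor
      · by_contra hc
        have h1 : σ⁻¹ z = z := fix_symm σ z (hfix z (by omega))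
        omega
      · by_contra hc
        have h1 : σ⁻¹ (z + 1) = z + 1 := fix_symm σ (z + 1) (hfix (z + 1) (by omega))
        omega
    have hfix' : ∀ j, j < lo ∨ hi < j → σ' j = j := by
      intro j hj
      have : σ j = j := hfix j hj
      simp only [hσ', Equiv.trans_apply, this, hs, Equiv.swap_apply_def]
      split_ifs <;> omega
    have hsymm' : ∀ x, σ'⁻¹ x = σ⁻¹ (s x) := by
      intro x
      simp [hσ', Equiv.Perm.inv_def, Equiv.symm_trans_apply, Equiv.Perm.inv_def, hs]
    have hne : η z ≠ η (z + 1) := fun h => by have := η.injective h; omega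
    have hinv' : ∀ i j : ℤ, i < j → σ'⁻¹ j < σ'⁻¹ i → tasepW z η j < tasepW z η i := by
      intro i j hij hlt'
      rw [hsymm' i, hsymm' j] at hlt'
      have A1 := hinv i j
      have A2 := hinv i z
      have A3 := hinv i (z + 1)
      have A4 := hinv z j
      have A5 := hinv (z + 1) j
      have A6 := hinv z (z + 1)
      have Ciz : i = z → η i = η z ∧ σ⁻¹ i = σ⁻¹ z := fun h => by subst h; exact ⟨rfl, rfl⟩
      have Ci1 : i = z + 1 → η i = η (z + 1) ∧ σ⁻¹ i = σ⁻¹ (z + 1) := fun h => by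
        subst h; exact ⟨rfl, rfl⟩
      have Cjz : j = z → η j = η z ∧ σ⁻¹ j = σ⁻¹ z := fun h => by subst h; exact ⟨rfl, rfl⟩
      have Cj1 : j = z + 1 → η j = η (z + 1) ∧ σ⁻¹ j = σ⁻¹ (z + 1) := fun h => by
        subst h; exact ⟨rfl, rfl⟩
      rw [tasepW]
      split_ifs with hη
      · simp only [Equiv.trans_apply, hs, Equiv.swap_apply_def] at hlt' ⊢
        split_ifs at hlt' ⊢ <;> omega
      · simp only [hs, Equiv.swap_apply_def] at hlt'
        split_ifs at hlt' <;> omega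
    have houtside : ∀ j, j < lo ∨ hi < j → tasepW z η j = η j := by
      intro j hj
      rw [tasepW]
      split_ifs with hη
      · simp only [Equiv.trans_apply, hs, Equiv.swap_apply_def]
        split_ifs <;> first | omega | rfl
      · rfl
    have himage : tasepW z η '' Set.Icc lo hi = η '' Set.Icc lo hi := by
      rw [tasepW]
      split_ifs with hη
      · have : ⇑((Equiv.swap z (z + 1)).trans η) = ⇑η ∘ ⇑(Equiv.swap z (z + 1)) := rfl
        rw [this, Set.image_comp, swap_image_Icc lo hi z hz.1 hz.2]
      · rfl
    obtain ⟨C1, C2, C3⟩ := ih σ' (tasepW z η) hAsc' (by rw [← Fw_cons]; exact hsub) hfix' hinv'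
    refine ⟨?_, ?_, ?_⟩
    · intro j hj
      rw [tasepWword_cons, C1 j hj, houtside j hj]
    · intro i j hij hlt2
      rw [tasepWword_cons]
      exact C2 i j hij (by rwa [Fw_cons] at hlt2)
    · rw [tasepWword_cons, C3, himage]

end TasepAux

namespace TasepAux

lemma InvSet_w0 (lo hi : ℤ) (σ : Equiv.Perm ℤ)
    (hσ : ∀ j, σ j = if lo ≤ j ∧ j ≤ hi then lo + hi - j else j) :
    InvSet σ = {p : ℤ × ℤ | lo ≤ p.1 ∧ p.1 < p.2 ∧ p.2 ≤ hi} := by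
  ext ⟨i, j⟩
  simp only [InvSet, Set.mem_setOf_eq, hσ i, hσ j]
  split_ifs <;> omega

lemma w0_symm (lo hi : ℤ) (σ : Equiv.Perm ℤ)
    (hσ : ∀ j, σ j = if lo ≤ j ∧ j ≤ hi then lo + hi - j else j) :
    ∀ j, σ⁻¹ j = if lo ≤ j ∧ j ≤ hi then lo + hi - j else j := by
  intro j
  apply σ.injective
  rw [Equiv.Perm.inv_def, Equiv.apply_symm_apply, hσ]
  split_ifs <;> omega

lemma pair_count (lo hi : ℤ) :
    2 * ((Finset.Icc lo hi ×ˢ Finset.Icc lo hi).filter fun p : ℤ × ℤ => p.1 < p.2).card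
      + (Finset.Icc lo hi).card = (Finset.Icc lo hi).card * (Finset.Icc lo hi).card := by
  set S := Finset.Icc lo hi ×ˢ Finset.Icc lo hi with hS
  have htot : (S.filter fun p : ℤ × ℤ => p.1 < p.2).card
      + (S.filter fun p : ℤ × ℤ => ¬ p.1 < p.2).card = S.card :=
    Finset.card_filter_add_card_filter_not _
  have hBD : (S.filter fun p : ℤ × ℤ => ¬ p.1 < p.2)
      = (S.filter fun p : ℤ × ℤ => p.2 < p.1) ∪ (S.filter fun p : ℤ × ℤ => p.1 = p.2) := by
    rw [← Finset.filter_or]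
    apply Finset.filter_congr
    intro p _
    constructor
    · intro h; omega
    · intro h; omega
  have hdisj : Disjoint (S.filter fun p : ℤ × ℤ => p.2 < p.1)
      (S.filter fun p : ℤ × ℤ => p.1 = p.2) := by
    rw [Finset.disjoint_left]
    intro p hp1 hp2
    simp only [Finset.mem_filter] at hp1 hp2
    omega
  have hBA : (S.filter fun p : ℤ × ℤ => p.2 < p.1).card
      = (S.filter fun p : ℤ × ℤ => p.1 < p.2).card := by
    refine Finset.card_bij' (fun p _ => p.swap) (fun p _ => p.swap) ?_ ?_ ?_ ?_ <;>
      intro p hp <;>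
      simp only [Finset.mem_filter, hS, Finset.mem_product, Prod.fst_swap, Prod.snd_swap,
        Prod.swap_swap] at hp ⊢ <;>
      tauto
  have hD : (S.filter fun p : ℤ × ℤ => p.1 = p.2).card = (Finset.Icc lo hi).card := by
    rw [show (S.filter fun p : ℤ × ℤ => p.1 = p.2)
        = (Finset.Icc lo hi).image (fun x => (x, x)) from ?_]
    · exact Finset.card_image_of_injective _ (fun a b h => congrArg Prod.fst h)
    · ext ⟨x, y⟩
      simp only [Finset.mem_filter, hS, Finset.mem_product, Finset.mem_image, Prod.mk.injEq]
      constructor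
      · rintro ⟨⟨h1, _⟩, rfl⟩; exact ⟨x, h1, rfl, rfl⟩
      · rintro ⟨a, ha, rfl, rfl⟩; exact ⟨⟨ha, ha⟩, rfl⟩
  have hcard : S.card = (Finset.Icc lo hi).card * (Finset.Icc lo hi).card := by
    rw [hS, Finset.card_product]
  rw [hBD, Finset.card_union_of_disjoint hdisj, hBA, hD] at htot
  omega

end TasepAux

open TasepAux

/-- If `s_1, …, s_m` (adjacent transpositions, `s_i = (z_i, z_i+1)`) form a reduced word for
the order-reversing permutation of `{-M₋, …, M₊}`, then `W_{s_m} ⋯ W_{s_1} η` agrees with `η`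
outside `{-M₋, …, M₊}`, and on `{-M₋, …, M₊}` its values are the values of `η` there sorted in
decreasing order; in particular the value at `-M₋` is the maximum and the value at `M₊` is the
minimum of `η` over the interval. -/
theorem tasepW_reduced_word_sorts (Mm Mp : ℕ) (hMm : 0 < Mm) (hMp : 0 < Mp)
    (η : Equiv.Perm ℤ) (ss : List ℤ)
    (hword : ∀ j : ℤ,
      (ss.foldl (fun (σ : Equiv.Perm ℤ) z => σ.trans (Equiv.swap z (z + 1))) 1) j
        = if -(Mm : ℤ) ≤ j ∧ j ≤ (Mp : ℤ) then (Mp : ℤ) - Mm - j else j)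
    (hreduced : ss.length = (Mp + Mm) * (Mp + Mm + 1) / 2) :
    (∀ j : ℤ, (j < -(Mm : ℤ) ∨ (Mp : ℤ) < j) → tasepWword ss η j = η j) ∧
    (∀ i j : ℤ, -(Mm : ℤ) ≤ i → i < j → j ≤ (Mp : ℤ) →
        tasepWword ss η j < tasepWword ss η i) ∧
    (tasepWword ss η '' (Set.Icc (-(Mm : ℤ)) (Mp : ℤ))
        = η '' (Set.Icc (-(Mm : ℤ)) (Mp : ℤ))) ∧
    (tasepWword ss η (-(Mm : ℤ)) = sSup (η '' (Set.Icc (-(Mm : ℤ)) (Mp : ℤ)))) ∧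
    (tasepWword ss η (Mp : ℤ) = sInf (η '' (Set.Icc (-(Mm : ℤ)) (Mp : ℤ)))) := by
  set lo : ℤ := -(Mm : ℤ) with hlo
  set hi : ℤ := (Mp : ℤ) with hhi
  have hMm' : (0 : ℤ) < Mm := by exact_mod_cast hMm
  have hMp' : (0 : ℤ) < Mp := by exact_mod_cast hMp
  have hlohi : lo < hi := by omega
  -- the final permutation
  have hσ : ∀ j, Fw ss 1 j = if lo ≤ j ∧ j ≤ hi then lo + hi - j else j := by
    intro j
    rw [show Fw ss 1 j
        = (ss.foldl (fun (σ : Equiv.Perm ℤ) z => σ.trans (Equiv.swap z (z + 1))) 1) j from rfl,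
      hword j]
    split_ifs <;> omega
  -- inversion set of the final permutation
  have hIw : InvSet (Fw ss 1) = {p : ℤ × ℤ | lo ≤ p.1 ∧ p.1 < p.2 ∧ p.2 ≤ hi} :=
    InvSet_w0 lo hi _ hσ
  -- cardinality of the inversion set
  have hPset : {p : ℤ × ℤ | lo ≤ p.1 ∧ p.1 < p.2 ∧ p.2 ≤ hi}
      = ↑((Finset.Icc lo hi ×ˢ Finset.Icc lo hi).filter fun p : ℤ × ℤ => p.1 < p.2) := by
    ext ⟨i, j⟩
    simp only [Set.mem_setOf_eq, Finset.coe_filter, Finset.mem_product, Finset.mem_Icc]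
    omega
  have hIcccard : (Finset.Icc lo hi).card = Mp + Mm + 1 := by
    rw [Int.card_Icc]
    omega
  have hPcard : ((Finset.Icc lo hi ×ˢ Finset.Icc lo hi).filter
      fun p : ℤ × ℤ => p.1 < p.2).card = ss.length := by
    have h2 := pair_count lo hi
    rw [hIcccard] at h2
    have hq : (Mp + Mm + 1) * (Mp + Mm + 1) = (Mp + Mm) * (Mp + Mm + 1) + (Mp + Mm + 1) := by
      ring
    omega
  have hncard : (InvSet (Fw ss 1)).ncard = ss.length := by
    rw [hIw, hPset, Set.ncard_coe_finset, hPcard]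
  -- reducedness: all steps are ascents
  have hfin1 : (InvSet (1 : Equiv.Perm ℤ)).Finite := by
    rw [InvSet_one]; exact Set.finite_empty
  obtain ⟨hf, hle, himp⟩ := counting ss 1 hfin1
  have hAsc : AllAsc 1 ss := by
    apply himp
    rw [hncard, InvSet_one, Set.ncard_empty]
    omega
  -- apply the main lemma
  have hsub : ∀ p ∈ InvSet (Fw ss 1), lo ≤ p.1 ∧ p.2 ≤ hi := by
    intro p hp
    rw [hIw] at hp
    exact ⟨hp.1, hp.2.2⟩
  have hfix1 : ∀ j, j < lo ∨ hi < j → (1 : Equiv.Perm ℤ) j = j := fun _ _ => rfl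
  have hinv1 : ∀ i j : ℤ, i < j → (1 : Equiv.Perm ℤ)⁻¹ j < (1 : Equiv.Perm ℤ)⁻¹ i
      → η j < η i := by
    intro i j hij h
    simp only [inv_one, Equiv.Perm.one_apply] at h
    omega
  obtain ⟨O, Dec, Img⟩ := main lo hi ss 1 η hAsc hsub hfix1 hinv1
  have hsymm := w0_symm lo hi _ hσ
  -- strict decrease on the interval
  have hdec : ∀ i j : ℤ, lo ≤ i → i < j → j ≤ hi →
      tasepWword ss η j < tasepWword ss η i := by
    intro i j h1 h2 h3
    apply Dec i j h2
    rw [hsymm i, hsymm j, if_pos (by omega : lo ≤ i ∧ i ≤ hi),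
      if_pos (by omega : lo ≤ j ∧ j ≤ hi)]
    omega
  refine ⟨O, hdec, Img, ?_, ?_⟩
  · have hg : IsGreatest (η '' Set.Icc lo hi) (tasepWword ss η lo) := by
      constructor
      · rw [← Img]
        exact ⟨lo, by simp [Set.mem_Icc]; omega, rfl⟩
      · intro y hy
        rw [← Img] at hy
        obtain ⟨x, hx, rfl⟩ := hy
        simp only [Set.mem_Icc] at hx
        rcases eq_or_lt_of_le hx.1 with rfl | hlt
        · exact le_refl _
        · exact le_of_lt (hdec lo x (le_refl _) hlt hx.2)
    exact hg.csSup_eq.symm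
  · have hg : IsLeast (η '' Set.Icc lo hi) (tasepWword ss η hi) := by
      constructor
      · rw [← Img]
        exact ⟨hi, by simp [Set.mem_Icc]; omega, rfl⟩
      · intro y hy
        rw [← Img] at hy
        obtain ⟨x, hx, rfl⟩ := hy
        simp only [Set.mem_Icc] at hx
        rcases eq_or_lt_of_le hx.2 with rfl | hlt
        · exact le_refl _
        · exact le_of_lt (hdec x hi hx.1 hlt (le_refl _))
    exact hg.csInf_eq.symm
end

section
/- Consider two sequences of real-valued random variables {X_n} and {X̃_n}, each pair defined on the same probability space. If X_n ≥ X̃_n almost surely for each n, and both X_n and X̃_n converge in distribution to the same limit law D, then X_n − X̃_n converges to 0 in probability. -/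
open MeasureTheory Filter Set

/-- Sandwich lemma for distributional limits (first half of Lemma 4.1 of [BC09]):
if `X_n ≥ X̃_n` a.s. and both converge in distribution (i.e. their CDFs converge at every
continuity point of the limiting CDF) to the same law `D`, then `X_n − X̃_n → 0` in
probability. -/
theorem sandwich_distributional_limits
    {Ω : Type*} [MeasurableSpace Ω] (μ : Measure Ω) [IsProbabilityMeasure μ]
    (X Xt : ℕ → Ω → ℝ) (hX : ∀ n, Measurable (X n)) (hXt : ∀ n, Measurable (Xt n))
    (D : Measure ℝ) [IsProbabilityMeasure D]
    (hge : ∀ n, ∀ᵐ ω ∂μ, Xt n ω ≤ X n ω)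
    (hconvX : ∀ s : ℝ, ContinuousAt (fun x => (D (Iic x)).toReal) s →
      Tendsto (fun n => (μ {ω | X n ω ≤ s}).toReal) atTop (nhds ((D (Iic s)).toReal)))
    (hconvXt : ∀ s : ℝ, ContinuousAt (fun x => (D (Iic x)).toReal) s →
      Tendsto (fun n => (μ {ω | Xt n ω ≤ s}).toReal) atTop (nhds ((D (Iic s)).toReal))) :
    ∀ ε > 0, Tendsto (fun n => (μ {ω | ε ≤ |X n ω - Xt n ω|}).toReal) atTop (nhds 0) := by
  intro ε hε
  have hFmono : Monotone (fun x => (D (Iic x)).toReal) := fun a b hab =>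
    ENNReal.toReal_mono (measure_ne_top D _) (measure_mono (Iic_subset_Iic.2 hab))
  have hFeq : (fun x => (D (Iic x)).toReal) = fun x => ProbabilityTheory.cdf D x := by
    funext x; exact (ProbabilityTheory.cdf_eq_real D x).symm
  have hFbot : Tendsto (fun x => (D (Iic x)).toReal) atBot (nhds 0) := by
    rw [hFeq]; exact ProbabilityTheory.tendsto_cdf_atBot D
  have hFtop : Tendsto (fun x => (D (Iic x)).toReal) atTop (nhds 1) := by
    rw [hFeq]; exact ProbabilityTheory.tendsto_cdf_atTop D
  have hdense : Dense {x | ContinuousAt (fun x => (D (Iic x)).toReal) x} := by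
    have := (hFmono.countable_not_continuousAt).dense_compl (𝕜 := ℝ)
    simpa [compl_setOf] using this
  have hcp : ∀ a b : ℝ, a < b →
      ∃ x, a < x ∧ x < b ∧ ContinuousAt (fun x => (D (Iic x)).toReal) x := by
    intro a b hab
    obtain ⟨x, hx1, hx2⟩ := hdense.exists_mem_open isOpen_Ioo (nonempty_Ioo.2 hab)
    exact ⟨x, hx2.1, hx2.2, hx1⟩
  rw [NormedAddCommGroup.tendsto_nhds_zero]
  intro δ hδ
  obtain ⟨a, ha⟩ : ∃ a : ℝ, (D (Iic a)).toReal < δ / 4 :=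
    (hFbot.eventually (gt_mem_nhds (by linarith : (0:ℝ) < δ / 4))).exists
  obtain ⟨b, hb⟩ : ∃ b : ℝ, 1 - δ / 4 < (D (Iic b)).toReal :=
    (hFtop.eventually (lt_mem_nhds (by linarith : (1:ℝ) - δ / 4 < 1))).exists
  have hh2 : 0 < ε / 2 := by positivity
  set c : ℝ := a - ε / 4 with hcdef
  set k : ℕ := ⌈(b - c) / (ε / 2)⌉₊ with hkdef
  have hks : b ≤ c + k * (ε / 2) := by
    have := Nat.le_ceil ((b - c) / (ε / 2))
    rw [div_le_iff₀ hh2] at this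
    rw [← hkdef] at this
    linarith
  have hex : ∀ i : ℕ, ∃ x, c + i * (ε / 2) < x ∧ x < c + i * (ε / 2) + ε / 4 ∧
      ContinuousAt (fun x => (D (Iic x)).toReal) x :=
    fun i => hcp _ _ (by linarith)
  choose s hs1 hs2 hs3 using hex
  have hs0 : (D (Iic (s 0))).toReal < δ / 4 := by
    have h0 : s 0 < a := by have := hs2 0; push_cast at this; linarith
    exact lt_of_le_of_lt (hFmono h0.le) ha
  have hsk : 1 - δ / 4 < (D (Iic (s k))).toReal := by
    have h0 : b < s k := lt_of_le_of_lt hks (hs1 k)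
    exact lt_of_lt_of_le hb (hFmono h0.le)
  have hgap : ∀ i : ℕ, s (i + 1) < s i + ε := by
    intro i
    have h1 := hs1 i
    have h2' := hs2 (i + 1)
    push_cast at h2'
    linarith
  -- the bound
  have hfb : ∀ n, (μ {ω | ε ≤ |X n ω - Xt n ω|}).toReal ≤
      (μ {ω | X n ω ≤ s 0}).toReal + (1 - (μ {ω | Xt n ω ≤ s k}).toReal) +
        ∑ i ∈ Finset.range (k + 1),
          ((μ {ω | Xt n ω ≤ s i}).toReal - (μ {ω | X n ω ≤ s i}).toReal) := by
    intro n
    set A : Set Ω := {ω | X n ω ≤ s 0} with hA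
    set B : Set Ω := {ω | s k < Xt n ω} with hB
    set C : ℕ → Set Ω := fun i => {ω | Xt n ω ≤ s i} ∩ {ω | s i < X n ω} with hC
    have hincl : ({ω | ε ≤ |X n ω - Xt n ω|} : Set Ω) ≤ᵐ[μ]
        ((A ∪ B ∪ ⋃ i ∈ Finset.range (k + 1), C i : Set Ω)) := by
      filter_upwards [hge n] with ω hω hωE
      have hωE' : ε ≤ |X n ω - Xt n ω| := hωE
      have hdiff : ε ≤ X n ω - Xt n ω := by
        rwa [abs_of_nonneg (by linarith)] at hωE'
      show ω ∈ (A ∪ B ∪ ⋃ i ∈ Finset.range (k + 1), C i : Set Ω)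
      by_cases hA0 : X n ω ≤ s 0
      · exact Or.inl (Or.inl hA0)
      by_cases hBk : s k < Xt n ω
      · exact Or.inl (Or.inr hBk)
      push_neg at hA0 hBk
      refine Set.mem_union_right _ ?_
      set T : Finset ℕ := (Finset.range (k + 1)).filter (fun i => s i < X n ω) with hT
      have hTne : T.Nonempty :=
        ⟨0, Finset.mem_filter.2 ⟨Finset.mem_range.2 (Nat.succ_pos k), hA0⟩⟩
      obtain ⟨hirange, hiX⟩ := Finset.mem_filter.1 (T.max'_mem hTne)
      have hXtlei : Xt n ω ≤ s (T.max' hTne) := by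
        by_contra hcon
        push_neg at hcon
        have hik : T.max' hTne < k := by
          rcases Nat.lt_succ_iff_lt_or_eq.1 (Finset.mem_range.1 hirange) with h | h
          · exact h
          · exact absurd hBk (by rw [← h]; exact not_le.2 hcon)
        have hnext : ¬ (s (T.max' hTne + 1) < X n ω) := by
          intro hcon2
          have hmem : T.max' hTne + 1 ∈ T :=
            Finset.mem_filter.2 ⟨Finset.mem_range.2 (by omega), hcon2⟩
          have := T.le_max' _ hmem
          omega
        push_neg at hnext
        have := hgap (T.max' hTne)
        linarith
      exact mem_biUnion hirange ⟨hXtlei, hiX⟩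
    have hmeas1 : μ {ω | ε ≤ |X n ω - Xt n ω|} ≤
        μ A + μ B + ∑ i ∈ Finset.range (k + 1), μ (C i) := by
      refine (measure_mono_ae hincl).trans ?_
      exact (measure_union_le _ _).trans
        (add_le_add (measure_union_le _ _) (measure_biUnion_finset_le _ _))
    have hRHSne : μ A + μ B + ∑ i ∈ Finset.range (k + 1), μ (C i) ≠ ⊤ := by
      refine ENNReal.add_ne_top.2 ⟨ENNReal.add_ne_top.2
        ⟨measure_ne_top μ A, measure_ne_top μ B⟩, ?_⟩
      exact (ENNReal.sum_ne_top).2 fun i _ => measure_ne_top μ _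
    have h1 := ENNReal.toReal_mono hRHSne hmeas1
    rw [ENNReal.toReal_add (ENNReal.add_ne_top.2 ⟨measure_ne_top μ A, measure_ne_top μ B⟩)
        ((ENNReal.sum_ne_top).2 fun i _ => measure_ne_top μ _),
      ENNReal.toReal_add (measure_ne_top μ A) (measure_ne_top μ B),
      ENNReal.toReal_sum (fun i _ => measure_ne_top μ _)] at h1
    -- bound on B
    have hBbound : (μ B).toReal ≤ 1 - (μ {ω | Xt n ω ≤ s k}).toReal := by
      have hdisj : Disjoint B {ω | Xt n ω ≤ s k} := by
        rw [Set.disjoint_left]; intro ω h1' h2'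
        simp only [Set.mem_setOf_eq] at h1' h2' ⊢
        exact absurd h2' (not_le.2 h1')
      have hun : μ B + μ {ω | Xt n ω ≤ s k} ≤ 1 := by
        rw [← measure_union hdisj (measurableSet_le (hXt n) measurable_const)]
        exact (measure_mono (subset_univ _)).trans_eq measure_univ
      have := ENNReal.toReal_mono (by simp) hun
      rw [ENNReal.toReal_add (measure_ne_top μ B) (measure_ne_top μ _),
        ENNReal.toReal_one] at this
      linarith
    -- bound on C i
    have hCbound : ∀ i ∈ Finset.range (k + 1), (μ (C i)).toReal ≤
        (μ {ω | Xt n ω ≤ s i}).toReal - (μ {ω | X n ω ≤ s i}).toReal := by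
      intro i _
      have hdisj : Disjoint (C i) {ω | X n ω ≤ s i} := by
        rw [Set.disjoint_left]; intro ω h1' h2'
        simp only [hC, Set.mem_setOf_eq, Set.mem_inter_iff] at h1' h2' ⊢
        exact absurd h2' (not_le.2 h1'.2)
      have hsub : ((C i ∪ {ω | X n ω ≤ s i} : Set Ω)) ≤ᵐ[μ] ({ω | Xt n ω ≤ s i} : Set Ω) := by
        filter_upwards [hge n] with ω hω hmem
        rcases (hmem : ω ∈ (C i ∪ {ω | X n ω ≤ s i} : Set Ω)) with h | h
        · exact h.1
        · exact le_trans hω h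
      have hun : μ (C i) + μ {ω | X n ω ≤ s i} ≤ μ {ω | Xt n ω ≤ s i} := by
        rw [← measure_union hdisj (measurableSet_le (hX n) measurable_const)]
        exact measure_mono_ae hsub
      have := ENNReal.toReal_mono (measure_ne_top μ _) hun
      rw [ENNReal.toReal_add (measure_ne_top μ _) (measure_ne_top μ _)] at this
      linarith
    have hsum := Finset.sum_le_sum hCbound
    linarith
  -- limits
  have hlim : Tendsto (fun n =>
      (μ {ω | X n ω ≤ s 0}).toReal + (1 - (μ {ω | Xt n ω ≤ s k}).toReal) +
        ∑ i ∈ Finset.range (k + 1),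
          ((μ {ω | Xt n ω ≤ s i}).toReal - (μ {ω | X n ω ≤ s i}).toReal)) atTop
      (nhds ((D (Iic (s 0))).toReal + (1 - (D (Iic (s k))).toReal) +
        ∑ i ∈ Finset.range (k + 1), ((D (Iic (s i))).toReal - (D (Iic (s i))).toReal))) :=
    ((hconvX (s 0) (hs3 0)).add (tendsto_const_nhds.sub (hconvXt (s k) (hs3 k)))).add
      (tendsto_finset_sum _ fun i _ => (hconvXt (s i) (hs3 i)).sub (hconvX (s i) (hs3 i)))
  have hL : (D (Iic (s 0))).toReal + (1 - (D (Iic (s k))).toReal) +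
      ∑ i ∈ Finset.range (k + 1), ((D (Iic (s i))).toReal - (D (Iic (s i))).toReal) < δ := by
    have hz : ∑ i ∈ Finset.range (k + 1),
        ((D (Iic (s i))).toReal - (D (Iic (s i))).toReal) = 0 := by simp
    rw [hz]
    linarith
  filter_upwards [hlim.eventually_lt_const hL] with n hn
  have h0 : 0 ≤ (μ {ω | ε ≤ |X n ω - Xt n ω|}).toReal := ENNReal.toReal_nonneg
  rw [Real.norm_eq_abs, abs_of_nonneg h0]
  exact lt_of_le_of_lt (hfb n) hn
end

section
/- For TASEP height functions under the basic coupling, for any 0 ≤ τ ≤ t and any x ∈ ℤ: h(x, t) ≤ min_{y ∈ ℤ} { h(y, τ) + h^step_{y,τ}(x, t) }, where h^step_{y,τ}(x, t) is the height at (x, t) of the TASEP started at time τ from the wedge initial condition h(·, τ) = |· − y|, coupled via the same Poisson clocks. -/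
/-- A TASEP height function: nearest-neighbor increments of absolute value 1. -/
def IsHeightFun (h : ℤ → ℤ) : Prop := ∀ x : ℤ, |h (x + 1) - h x| = 1

/-- The corner-flip update at site `x`: if `x` is a strict local minimum of `h`,
then `h x` increases by `2`; otherwise nothing happens. -/
def tasepFlip (x : ℤ) (h : ℤ → ℤ) : ℤ → ℤ :=
  if h x < h (x - 1) ∧ h x < h (x + 1) then Function.update h x (h x + 2) else h

/-- Apply a (time-ordered) sequence of Poisson clock events (the events between times `τ`
and `t`), given as the list of their sites, to a height function; the same list realizes
the basic coupling for several height functions. -/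
def applyEvents (L : List ℤ) (h : ℤ → ℤ) : ℤ → ℤ :=
  L.foldl (fun g z => tasepFlip z g) h

lemma tasepFlip_mono (x : ℤ) (f g : ℤ → ℤ) (hle : ∀ z, f z ≤ g z)
    (hpar : ∀ z, (g z - f z) % 2 = 0) :
    (∀ z, tasepFlip x f z ≤ tasepFlip x g z) ∧
    (∀ z, (tasepFlip x g z - tasepFlip x f z) % 2 = 0) := by
  unfold tasepFlip
  by_cases hf : f x < f (x - 1) ∧ f x < f (x + 1) <;>
  by_cases hg : g x < g (x - 1) ∧ g x < g (x + 1) <;>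
  simp only [hf, hg, and_self, if_true, if_false, if_pos, if_neg]
  · constructor <;> intro z <;> by_cases hz : z = x
    · subst hz; simp only [Function.update_self]; have := hle z; omega
    · simp only [Function.update_of_ne hz]; exact hle z
    · subst hz; simp only [Function.update_self]; have := hpar z; omega
    · simp only [Function.update_of_ne hz]; exact hpar z
  · -- f flips, g doesn't: then f x + 2 ≤ g x
    have hne : f x ≠ g x := by
      intro he
      apply hg
      constructor
      · exact lt_of_lt_of_le (he ▸ hf.1) (hle (x - 1))
      · exact lt_of_lt_of_le (he ▸ hf.2) (hle (x + 1))
    have h1 := hle x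
    have h2 := hpar x
    constructor <;> intro z <;> by_cases hz : z = x
    · subst hz; simp only [Function.update_self]; omega
    · simp only [Function.update_of_ne hz]; exact hle z
    · subst hz; simp only [Function.update_self]; omega
    · simp only [Function.update_of_ne hz]; exact hpar z
  · have h1 := hle x
    have h2 := hpar x
    constructor <;> intro z <;> by_cases hz : z = x
    · subst hz; simp only [Function.update_self]; omega
    · simp only [Function.update_of_ne hz]; exact hle z
    · subst hz; simp only [Function.update_self]; omega
    · simp only [Function.update_of_ne hz]; exact hpar z
  · exact ⟨hle, hpar⟩

lemma applyEvents_mono (L : List ℤ) (f g : ℤ → ℤ) (hle : ∀ z, f z ≤ g z)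
    (hpar : ∀ z, (g z - f z) % 2 = 0) :
    ∀ x, applyEvents L f x ≤ applyEvents L g x := by
  induction L generalizing f g with
  | nil => exact hle
  | cons a t ih =>
      have := tasepFlip_mono a f g hle hpar
      exact ih _ _ this.1 this.2

lemma tasepFlip_const_add (x : ℤ) (c : ℤ) (f : ℤ → ℤ) :
    tasepFlip x (fun z => c + f z) = fun z => c + tasepFlip x f z := by
  unfold tasepFlip
  by_cases hf : f x < f (x - 1) ∧ f x < f (x + 1)
  · have : (fun z => c + f z) x < (fun z => c + f z) (x - 1) ∧
        (fun z => c + f z) x < (fun z => c + f z) (x + 1) := by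
      simpa using hf
    rw [if_pos this, if_pos hf]
    funext z
    by_cases hz : z = x <;> simp [Function.update, hz] <;> ring
  · have : ¬((fun z => c + f z) x < (fun z => c + f z) (x - 1) ∧
        (fun z => c + f z) x < (fun z => c + f z) (x + 1)) := by
      simpa using hf
    rw [if_neg this, if_neg hf]

lemma applyEvents_const_add (L : List ℤ) (c : ℤ) (f : ℤ → ℤ) :
    applyEvents L (fun z => c + f z) = fun z => c + applyEvents L f z := by
  induction L generalizing f with
  | nil => rfl
  | cons a t ih =>
      show applyEvents t (tasepFlip a fun z => c + f z) = _
      rw [tasepFlip_const_add, ih]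
      rfl

lemma height_bound (h : ℤ → ℤ) (hh : IsHeightFun h) (y : ℤ) :
    ∀ n : ℤ, h (y + n) - h y ≤ (n.natAbs : ℤ) ∧ (h (y + n) - h y - n) % 2 = 0 := by
  intro n
  induction n using Int.induction_on with
  | zero => simp
  | succ k ih =>
      have e : y + ((k : ℤ) + 1) = (y + k) + 1 := by ring
      rw [e]
      have h1 := hh (y + k)
      rcases (abs_eq (by norm_num : (0:ℤ) ≤ 1)).mp h1 with h2 | h2 <;> omega
  | pred k ih =>
      have e : y + (-(k : ℤ) - 1) + 1 = y + -(k : ℤ) := by ring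
      have h1 := hh (y + (-(k : ℤ) - 1))
      rw [e] at h1
      rcases (abs_eq (by norm_num : (0:ℤ) ≤ 1)).mp h1 with h2 | h2 <;> omega

/-- First half of the concatenation property: for any height function `h` at time `τ`,
any `y`, and any realization `L` of the Poisson events in `[τ, t]`,
`h(x,t) ≤ h(y,τ) + h^step_{y,τ}(x,t)`, where `h^step_{y,τ}` is the evolution from the
wedge `|· − y|` under the same events. -/
theorem tasep_concatenation_upper_bound (h : ℤ → ℤ) (hh : IsHeightFun h)
    (L : List ℤ) (x y : ℤ) :
    applyEvents L h x ≤ h y + applyEvents L (fun z => |z - y|) x := by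
  have hle : ∀ z, h z ≤ h y + |z - y| := by
    intro z
    have := (height_bound h hh y (z - y)).1
    rw [show y + (z - y) = z by ring] at this
    rw [Int.abs_eq_natAbs]
    omega
  have hpar : ∀ z, ((h y + |z - y|) - h z) % 2 = 0 := by
    intro z
    have := (height_bound h hh y (z - y)).2
    rw [show y + (z - y) = z by ring] at this
    rw [Int.abs_eq_natAbs]
    omega
  have := applyEvents_mono L h (fun z => h y + |z - y|) hle hpar x
  rwa [applyEvents_const_add L (h y) (fun z => |z - y|)] at this
end

section
/- Concatenation property: for the TASEP height function h(x, t) there exists, for each ending point (x, t), a backwards path τ ↦ x(τ) with x(t) = x such that for every τ ∈ [0, t], h(x, t) = min_{y ∈ ℤ} { h(y, τ) + h^step_{y,τ}(x, t) }, with the minimum attained at y = x(τ). The path is defined by: x(s−) = x(s) except at suppressed jump attempts at the current location x(s), when x(s−) = x(s) + 1 if h(x(s),s) = h(x(s)+1,s) + 1, and x(s−) = x(s) − 1 if h(x(s),s) = h(x(s)−1,s) + 1. -/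
lemma applyEvents_nil (h : ℤ → ℤ) : applyEvents [] h = h := rfl

lemma applyEvents_cons (z : ℤ) (L : List ℤ) (h : ℤ → ℤ) :
    applyEvents (z :: L) h = applyEvents L (tasepFlip z h) := rfl

lemma heightStep {h : ℤ → ℤ} (hh : IsHeightFun h) (x : ℤ) :
    h (x + 1) = h x + 1 ∨ h (x + 1) = h x - 1 := by
  have := hh x
  rcases abs_cases (h (x+1) - h x) with ⟨e,_⟩|⟨e,_⟩ <;> omega

lemma heightStep' {h : ℤ → ℤ} (hh : IsHeightFun h) (x : ℤ) :
    h x = h (x - 1) + 1 ∨ h x = h (x - 1) - 1 := by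
  have := heightStep hh (x - 1)
  simpa using this

lemma heightLipNat {h : ℤ → ℤ} (hh : IsHeightFun h) (n : ℕ) :
    ∀ b : ℤ, |h (b + n) - h b| ≤ n := by
  induction n with
  | zero => intro b; simp
  | succ n IH =>
    intro b
    have h1 := IH b
    have h2 := hh (b + n)
    have h3 : |h (b + (n+1 : ℕ)) - h b| ≤ |h (b + n + 1) - h (b + n)| + |h (b + n) - h b| := by
      have : (b + (n+1 : ℕ)) = b + n + 1 := by push_cast; ring
      rw [this]
      exact abs_sub_le _ _ _
    push_cast at h3 ⊢
    omega

lemma heightLipAbs {h : ℤ → ℤ} (hh : IsHeightFun h) (a b : ℤ) :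
    |h a - h b| ≤ |a - b| := by
  rcases le_total b a with hab | hab
  · have hn : a = b + ((a - b).toNat : ℤ) := by omega
    have h1 := heightLipNat hh (a - b).toNat b
    rw [← hn] at h1
    have h2 : |a - b| = ((a - b).toNat : ℤ) := by
      rw [abs_of_nonneg (by omega : (0:ℤ) ≤ a - b)]; omega
    omega
  · have hn : b = a + ((b - a).toNat : ℤ) := by omega
    have h1 := heightLipNat hh (b - a).toNat a
    rw [← hn] at h1
    have h2 : |a - b| = ((b - a).toNat : ℤ) := by
      rw [abs_of_nonpos (by omega : a - b ≤ 0)]; omega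
    rcases abs_cases (h b - h a) with ⟨e,_⟩|⟨e,_⟩ <;>
      rcases abs_cases (h a - h b) with ⟨e2,_⟩|⟨e2,_⟩ <;> omega

lemma heightLip {h : ℤ → ℤ} (hh : IsHeightFun h) (a b : ℤ) :
    h a ≤ h b + |a - b| := by
  have h1 := heightLipAbs hh a b
  rcases abs_cases (h a - h b) with ⟨e,_⟩|⟨e,_⟩ <;> omega

lemma flip_height {h : ℤ → ℤ} (z : ℤ) (hh : IsHeightFun h) :
    IsHeightFun (tasepFlip z h) := by
  intro x
  unfold tasepFlip
  split_ifs with hc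
  · obtain ⟨h1, h2⟩ := hc
    have e1 : h (z + 1) = h z + 1 := by rcases heightStep hh z with e|e <;> omega
    have e2 : h (z - 1) = h z + 1 := by rcases heightStep' hh z with e|e <;> omega
    by_cases hx : x = z
    · subst hx
      have hne : x + 1 ≠ x := by omega
      rw [Function.update_self, Function.update_of_ne hne]
      have : h (x + 1) - (h x + 2) = -1 := by omega
      rw [this]; norm_num
    · by_cases hx1 : x + 1 = z
      · rw [hx1, Function.update_self, Function.update_of_ne hx]
        have : x = z - 1 := by omega
        rw [this]
        have : h z + 2 - h (z - 1) = 1 := by omega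
        rw [this]; norm_num
      · rw [Function.update_of_ne hx1, Function.update_of_ne hx]
        exact hh x
  · exact hh x

lemma flip_le (z : ℤ) (h : ℤ → ℤ) (u : ℤ) : h u ≤ tasepFlip z h u := by
  unfold tasepFlip
  split_ifs with hc
  · by_cases hu : u = z
    · subst hu; rw [Function.update_self]; omega
    · rw [Function.update_of_ne hu]
  · exact le_refl _

lemma flip_mono {g g' : ℤ → ℤ} (z : ℤ) (hg : IsHeightFun g) (hg' : IsHeightFun g')
    (hle : ∀ u, g u ≤ g' u) : ∀ u, tasepFlip z g u ≤ tasepFlip z g' u := by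
  intro u
  unfold tasepFlip
  by_cases hu : u = z
  · subst hu
    have d1 := heightStep hg u
    have d2 := heightStep' hg u
    have d3 := heightStep hg' u
    have d4 := heightStep' hg' u
    have l1 := hle (u - 1)
    have l2 := hle (u + 1)
    have l3 := hle u
    split_ifs with h1 h2 h2 <;> (try simp only [Function.update_self]) <;> omega
  · split_ifs with h1 h2 h2 <;>
      (try simp only [Function.update_of_ne hu]) <;> exact hle u

lemma applyEvents_height {h : ℤ → ℤ} (L : List ℤ) (hh : IsHeightFun h) :
    IsHeightFun (applyEvents L h) := by
  induction L generalizing h with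
  | nil => exact hh
  | cons z L IH => exact IH (flip_height z hh)

lemma applyEvents_mono_s11 (L : List ℤ) : ∀ g g' : ℤ → ℤ, IsHeightFun g → IsHeightFun g' →
    (∀ u, g u ≤ g' u) → ∀ u, applyEvents L g u ≤ applyEvents L g' u := by
  induction L with
  | nil => intro g g' _ _ hle u; exact hle u
  | cons z L IH =>
    intro g g' hg hg' hle u
    exact IH _ _ (flip_height z hg) (flip_height z hg') (flip_mono z hg hg' hle) u

lemma flip_const (z c : ℤ) (g : ℤ → ℤ) :
    tasepFlip z (fun u => c + g u) = fun u => c + tasepFlip z g u := by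
  funext u
  unfold tasepFlip
  have hcond : (c + g z < c + g (z-1) ∧ c + g z < c + g (z+1)) ↔
      (g z < g (z-1) ∧ g z < g (z+1)) := by omega
  split_ifs with h1 h2 h2
  · by_cases hu : u = z
    · subst hu; rw [Function.update_self, Function.update_self]; beta_reduce; ring
    · rw [Function.update_of_ne hu, Function.update_of_ne hu]
  · exact absurd (hcond.mp h1) h2
  · exact absurd (hcond.mpr h2) h1
  · rfl

lemma applyEvents_const (L : List ℤ) (c : ℤ) (g : ℤ → ℤ) :
    applyEvents L (fun u => c + g u) = fun u => c + applyEvents L g u := by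
  induction L generalizing g with
  | nil => rfl
  | cons z L IH =>
    rw [applyEvents_cons, flip_const, IH, applyEvents_cons]

lemma const_height {g : ℤ → ℤ} (c : ℤ) (hg : IsHeightFun g) :
    IsHeightFun (fun u => c + g u) := by
  intro x
  have := hg x
  simpa using this

lemma wedge_height (y : ℤ) : IsHeightFun (fun u => |u - y|) := by
  intro x
  dsimp only
  rcases abs_cases (x + 1 - y) with ⟨e1,_⟩|⟨e1,_⟩ <;>
    rcases abs_cases (x - y) with ⟨e2,_⟩|⟨e2,_⟩ <;>
    rcases abs_cases (|x + 1 - y| - |x - y|) with ⟨e3,_⟩|⟨e3,_⟩ <;> omega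

lemma flip_wedge_ne {z y : ℤ} (hzy : z ≠ y) :
    tasepFlip z (fun u => |u - y|) = fun u => |u - y| := by
  unfold tasepFlip
  rw [if_neg]
  rintro ⟨h1, h2⟩
  have h1' : |z - y| < |z - 1 - y| := h1
  have h2' : |z - y| < |z + 1 - y| := h2
  rcases abs_cases (z - y) with ⟨e1,_⟩|⟨e1,_⟩ <;>
    rcases abs_cases (z - 1 - y) with ⟨e2,_⟩|⟨e2,_⟩ <;>
    rcases abs_cases (z + 1 - y) with ⟨e3,_⟩|⟨e3,_⟩ <;> omega

lemma flip_wedge_self (y : ℤ) :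
    tasepFlip y (fun u => |u - y|) = Function.update (fun u => |u - y|) y 2 := by
  unfold tasepFlip
  rw [if_pos]
  · norm_num
  · constructor <;> simp

/-- Concatenation property: for each ending point `x` at time `t` there is a backwards
path `k ↦ path k` (indexed by intermediate times, i.e. by the splitting of the list `L`
of Poisson events into the events `L.take k` before time `τ` and `L.drop k` after) with
`path L.length = x`, such that for every intermediate time
`h(x,t) = min_y { h(y,τ) + h^step_{y,τ}(x,t) }`, the minimum being attained at
`y = path k`. Here `h^step_{y,τ}` is the evolution of the wedge `|· − y|` from time `τ`
under the same events. -/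
theorem tasep_concatenation (h : ℤ → ℤ) (hh : IsHeightFun h) (L : List ℤ) (x : ℤ) :
    ∃ path : ℕ → ℤ, path L.length = x ∧
      ∀ k ≤ L.length,
        (applyEvents L h x
          = applyEvents (L.take k) h (path k)
            + applyEvents (L.drop k) (fun z => |z - path k|) x) ∧
        (∀ y : ℤ, applyEvents L h x
          ≤ applyEvents (L.take k) h y + applyEvents (L.drop k) (fun z => |z - y|) x) := by
  induction L generalizing h hh with
  | nil =>
    refine ⟨fun _ => x, rfl, ?_⟩
    intro k hk
    have hk0 : k = 0 := Nat.le_zero.mp hk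
    subst hk0
    simp only [List.take_nil, List.drop_nil, applyEvents_nil]
    constructor
    · have : |x - x| = 0 := by simp
      omega
    · intro y; exact heightLip hh x y
  | cons z L' IH =>
    have hh' : IsHeightFun (tasepFlip z h) := flip_height z hh
    obtain ⟨p, hplen, hp⟩ := IH (tasepFlip z h) hh'
    obtain ⟨heq1, hmin1⟩ := hp 0 (Nat.zero_le _)
    simp only [List.take_zero, List.drop_zero, applyEvents_nil] at heq1 hmin1
    -- the key upper bound at k = 0, for every y
    have key_le : ∀ y : ℤ, applyEvents L' (tasepFlip z h) x
        ≤ h y + applyEvents L' (tasepFlip z (fun u => |u - y|)) x := by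
      intro y
      have hw : IsHeightFun fun u => |u - y| := wedge_height y
      have hwf : IsHeightFun (tasepFlip z fun u => |u - y|) := flip_height z hw
      have hps : ∀ u, h u ≤ h y + |u - y| := fun u => heightLip hh u y
      have h2 : ∀ u, tasepFlip z h u ≤ tasepFlip z (fun u => h y + |u - y|) u :=
        flip_mono z hh (const_height _ hw) hps
      rw [flip_const] at h2
      have h3 := applyEvents_mono_s11 L' _ _ hh' (const_height _ hwf) h2 x
      rw [applyEvents_const] at h3
      exact h3
    -- existence of a minimizer at k = 0
    have hex : ∃ y0 : ℤ, h y0 + applyEvents L' (tasepFlip z (fun u => |u - y0|)) x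
        ≤ applyEvents L' (tasepFlip z h) x := by
      by_cases hz : z = p 0
      · rw [← hz] at heq1
        by_cases hcond : h z < h (z - 1) ∧ h z < h (z + 1)
        · -- the event at z flips the height; the path stays at z
          refine ⟨z, ?_⟩
          rw [flip_wedge_self]
          have hW : IsHeightFun (Function.update (fun u => |u - z|) z 2) := by
            rw [← flip_wedge_self]; exact flip_height z (wedge_height z)
          have hWle : ∀ u, Function.update (fun u => |u - z|) z 2 u ≤ 2 + |u - z| := by
            intro u
            by_cases hu : u = z
            · subst hu; rw [Function.update_self]; simp
            · rw [Function.update_of_ne hu]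
              have h0 : (0:ℤ) ≤ |u - z| := abs_nonneg _
              omega
          have hmono := applyEvents_mono_s11 L' _ _ hW
            (const_height 2 (wedge_height z)) hWle x
          rw [applyEvents_const] at hmono
          beta_reduce at hmono
          have hval : tasepFlip z h z = h z + 2 := by
            unfold tasepFlip; rw [if_pos hcond, Function.update_self]
          omega
        · -- suppressed jump attempt at z: the path moves by one step
          have d1 := heightStep hh z
          have d2 := heightStep' hh z
          have hval : tasepFlip z h z = h z := by
            unfold tasepFlip; rw [if_neg hcond]
          rcases not_and_or.mp hcond with hc | hc
          all_goals push_neg at hc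
          · -- h z ≥ h (z-1), so h z = h (z-1) + 1 : move left
            have hl : h z = h (z - 1) + 1 := by omega
            refine ⟨z - 1, ?_⟩
            rw [flip_wedge_ne (show z ≠ z - 1 by omega)]
            have hble : ∀ u : ℤ, |u - (z - 1)| ≤ 1 + |u - z| := by
              intro u
              rcases abs_cases (u - (z - 1)) with ⟨e1,_⟩|⟨e1,_⟩ <;>
                rcases abs_cases (u - z) with ⟨e2,_⟩|⟨e2,_⟩ <;> omega
            have hmono := applyEvents_mono_s11 L' _ _ (wedge_height (z - 1))
              (const_height 1 (wedge_height z)) hble x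
            rw [applyEvents_const] at hmono
            beta_reduce at hmono
            omega
          · -- h z ≥ h (z+1), so h z = h (z+1) + 1 : move right
            have hr : h z = h (z + 1) + 1 := by omega
            refine ⟨z + 1, ?_⟩
            rw [flip_wedge_ne (show z ≠ z + 1 by omega)]
            have hble : ∀ u : ℤ, |u - (z + 1)| ≤ 1 + |u - z| := by
              intro u
              rcases abs_cases (u - (z + 1)) with ⟨e1,_⟩|⟨e1,_⟩ <;>
                rcases abs_cases (u - z) with ⟨e2,_⟩|⟨e2,_⟩ <;> omega
            have hmono := applyEvents_mono_s11 L' _ _ (wedge_height (z + 1))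
              (const_height 1 (wedge_height z)) hble x
            rw [applyEvents_const] at hmono
            beta_reduce at hmono
            omega
      · -- the event is not at the current path location
        refine ⟨p 0, ?_⟩
        rw [flip_wedge_ne hz]
        have hfl := flip_le z h (p 0)
        omega
    obtain ⟨y0, hge⟩ := hex
    have heq0 : applyEvents L' (tasepFlip z h) x
        = h y0 + applyEvents L' (tasepFlip z (fun u => |u - y0|)) x :=
      le_antisymm (key_le y0) hge
    refine ⟨fun k => if k = 0 then y0 else p (k - 1), ?_, ?_⟩
    · simp only [List.length_cons, Nat.succ_ne_zero, if_false, Nat.add_sub_cancel]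
      exact hplen
    · intro k hk
      cases k with
      | zero =>
        simp only [List.take_zero, List.drop_zero, applyEvents_nil, applyEvents_cons,
          if_pos rfl]
        exact ⟨heq0, key_le⟩
      | succ j =>
        have hj : j ≤ L'.length := by
          simpa using hk
        obtain ⟨e, m⟩ := hp j hj
        simp only [List.take_succ_cons, List.drop_succ_cons, applyEvents_cons,
          Nat.succ_ne_zero, if_false, Nat.add_sub_cancel]
        exact ⟨e, m⟩
end

section
/- Comparison lemma: let h₁, h₂ be two TASEP height functions evolved under the basic coupling, with backwards geodesics π_{k,z} ending at (z, t) for k ∈ {1,2} and z ∈ {x, y}, where x < y. On the event that π_{1,x} and π_{2,y} intersect at some space-time point (x_τ, τ), one has h₂(y, t) − h₂(x, t) ≥ h₁(y, t) − h₁(x, t). Symmetrically, if π_{1,y} and π_{2,x} intersect, then h₂(y, t) − h₂(x, t) ≤ h₁(y, t) − h₁(x, t). -/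
/-- `g` is a backwards geodesic for the height function `h` ending at `(z, t)`, where the
Poisson events of `[0, t]` are listed by `L` and intermediate times correspond to splits
`L = L.take k ++ L.drop k`: for every intermediate time the concatenation identity holds
with minimizer `g k`, while for every `y` the concatenation inequality holds. -/
def IsBackGeodesic (L : List ℤ) (h : ℤ → ℤ) (z : ℤ) (g : ℕ → ℤ) : Prop :=
  g L.length = z ∧
    ∀ k ≤ L.length,
      (applyEvents L h z
        = applyEvents (L.take k) h (g k)
          + applyEvents (L.drop k) (fun w => |w - g k|) z) ∧
      (∀ y : ℤ, applyEvents L h z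
        ≤ applyEvents (L.take k) h y + applyEvents (L.drop k) (fun w => |w - y|) z)


lemma tasep_comparison_key (h h' : ℤ → ℤ) (L : List ℤ) (x y : ℤ)
    (gx gy gx' gy' : ℕ → ℤ)
    (hgx : IsBackGeodesic L h x gx) (hgy : IsBackGeodesic L h y gy)
    (hgx' : IsBackGeodesic L h' x gx') (hgy' : IsBackGeodesic L h' y gy')
    (k : ℕ) (hk : k ≤ L.length) (heq : gx k = gy' k) :
    applyEvents L h y - applyEvents L h x ≤ applyEvents L h' y - applyEvents L h' x := by
  obtain ⟨e1, -⟩ := (hgx.2 k hk)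
  have i1 := (hgy.2 k hk).2 (gx k)
  obtain ⟨e2, -⟩ := (hgy'.2 k hk)
  have i2 := (hgx'.2 k hk).2 (gx k)
  rw [heq] at e1 i1 i2
  linarith

/-- Comparison lemma: if the backwards geodesic of `h₁` to `x` intersects the backwards
geodesic of `h₂` to `y` (with `x < y`), then
`h₂(y,t) − h₂(x,t) ≥ h₁(y,t) − h₁(x,t)`; symmetrically, if the geodesic of `h₁` to `y`
intersects that of `h₂` to `x`, the opposite inequality holds. -/
theorem tasep_comparison_lemma (h₁ h₂ : ℤ → ℤ)
    (hh₁ : IsHeightFun h₁) (hh₂ : IsHeightFun h₂)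
    (L : List ℤ) (x y : ℤ) (hxy : x < y)
    (g1x g1y g2x g2y : ℕ → ℤ)
    (hg1x : IsBackGeodesic L h₁ x g1x) (hg1y : IsBackGeodesic L h₁ y g1y)
    (hg2x : IsBackGeodesic L h₂ x g2x) (hg2y : IsBackGeodesic L h₂ y g2y) :
    ((∃ k ≤ L.length, g1x k = g2y k) →
      applyEvents L h₁ y - applyEvents L h₁ x ≤ applyEvents L h₂ y - applyEvents L h₂ x) ∧
    ((∃ k ≤ L.length, g1y k = g2x k) →
      applyEvents L h₂ y - applyEvents L h₂ x ≤ applyEvents L h₁ y - applyEvents L h₁ x) := by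
  constructor
  · rintro ⟨k, hk, heq⟩
    exact tasep_comparison_key h₁ h₂ L x y g1x g1y g2x g2y hg1x hg1y hg2x hg2y k hk heq
  · rintro ⟨k, hk, heq⟩
    exact tasep_comparison_key h₂ h₁ L x y g2x g2y g1x g1y hg2x hg2y hg1x hg1y k hk heq.symm
end

section
/- Suppose real-valued random variables satisfy h⁽¹⁾_t = h⁽²⁾_t + ε_t h⁽³⁾_t − X_t with X_t ≥ 0 almost surely, where ε_t → 0 is deterministic, h⁽¹⁾_t, h⁽²⁾_t, h⁽³⁾_t each converge in distribution to the same continuous law D (with h⁽³⁾_t tight). Then X_t → 0 in probability and hence h⁽¹⁾_t − h⁽²⁾_t → 0 in probability. -/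
open MeasureTheory Filter Set

private lemma SD_union {Ω : Type*} [MeasurableSpace Ω] (μ : Measure Ω) [IsFiniteMeasure μ]
    (A B : Set Ω) : (μ (A ∪ B)).toReal ≤ (μ A).toReal + (μ B).toReal := by
  rw [← ENNReal.toReal_add (measure_ne_top μ A) (measure_ne_top μ B)]
  exact ENNReal.toReal_mono (by simp [measure_ne_top]) (measure_union_le A B)

private lemma SD_mono {Ω : Type*} [MeasurableSpace Ω] (μ : Measure Ω) [IsFiniteMeasure μ]
    {A B : Set Ω} (h : A ⊆ B) : (μ A).toReal ≤ (μ B).toReal :=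
  ENNReal.toReal_mono (measure_ne_top μ _) (measure_mono h)

private lemma SD_biUnion {Ω : Type*} [MeasurableSpace Ω] (μ : Measure Ω) [IsFiniteMeasure μ]
    (n : ℕ) (C : ℕ → Set Ω) :
    (μ (⋃ i ∈ Finset.range n, C i)).toReal ≤ ∑ i ∈ Finset.range n, (μ (C i)).toReal := by
  rw [← ENNReal.toReal_sum (fun i _ => measure_ne_top μ (C i))]
  exact ENNReal.toReal_mono (by simp [ENNReal.sum_ne_top, measure_ne_top])
    (measure_biUnion_finset_le _ _)

private lemma SD_compl {Ω : Type*} [MeasurableSpace Ω] (μ : Measure Ω) [IsProbabilityMeasure μ]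
    {A : Set Ω} (hA : MeasurableSet A) : (μ Aᶜ).toReal = 1 - (μ A).toReal := by
  rw [measure_compl hA (measure_ne_top μ A), measure_univ,
    ENNReal.toReal_sub_of_le prob_le_one ENNReal.one_ne_top, ENNReal.toReal_one]

private lemma SD_diff {Ω : Type*} [MeasurableSpace Ω] (μ : Measure Ω) [IsFiniteMeasure μ]
    {A B : Set Ω} (hB : MeasurableSet B) (hBA : ∀ᵐ ω ∂μ, ω ∈ B → ω ∈ A) :
    (μ (A \ B)).toReal ≤ (μ A).toReal - (μ B).toReal := by
  have h1 : μ (A ∩ B) + μ (A \ B) = μ A := measure_inter_add_diff A hB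
  have h2 : μ B ≤ μ (A ∩ B) := by
    apply measure_mono_ae
    rw [ae_le_set]
    apply measure_mono_null (fun ω hω => ?_) (ae_iff.mp hBA)
    exact fun h => hω.2 ⟨h hω.1, hω.1⟩
  have h3 := congrArg ENNReal.toReal h1
  rw [ENNReal.toReal_add (measure_ne_top μ _) (measure_ne_top μ _)] at h3
  have h2' : (μ B).toReal ≤ (μ (A ∩ B)).toReal := ENNReal.toReal_mono (measure_ne_top μ _) h2
  linarith

private lemma SD_grid (a step x : ℝ) (n : ℕ) (h1 : a < x) (h2 : x ≤ a + n * step) :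
    ∃ i : ℕ, i < n ∧ a + i * step < x ∧ x ≤ a + (i + 1 : ℕ) * step := by
  induction n with
  | zero => simp at h2; linarith
  | succ n ih =>
    by_cases hc : x ≤ a + n * step
    · obtain ⟨i, hi, h⟩ := ih hc
      exact ⟨i, Nat.lt_succ_of_lt hi, h⟩
    · push_neg at hc
      refine ⟨n, Nat.lt_succ_self n, hc, ?_⟩
      push_cast at h2 ⊢
      linarith

private lemma SD_ev_close {α : Type*} {l : Filter α} {f : α → ℝ} {L c : ℝ}
    (h : Tendsto f l (nhds L)) (hc : 0 < c) : ∀ᶠ t in l, |f t - L| < c := by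
  have := Metric.tendsto_nhds.mp h c hc
  simpa [Real.dist_eq] using this

private lemma SD_tendsto_zero {f : ℕ → ℝ} (h0 : ∀ t, 0 ≤ f t)
    (h : ∀ δ > 0, ∀ᶠ t in atTop, f t ≤ δ) : Tendsto f atTop (nhds 0) := by
  rw [Metric.tendsto_nhds]
  intro δ hδ
  filter_upwards [h (δ / 2) (by linarith)] with t ht
  rw [Real.dist_eq, sub_zero, abs_of_nonneg (h0 t)]
  linarith

/-- The sandwich lemma: if `Z_t ≤ Y_t` a.s. and both converge in distribution to the same
CDF `F`, then `Y_t - Z_t → 0` in probability. -/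
private lemma SD_sandwich {Ω : Type*} [MeasurableSpace Ω] (μ : Measure Ω) [IsProbabilityMeasure μ]
    (Z Y : ℕ → Ω → ℝ) (hmZ : ∀ t, Measurable (Z t)) (hmY : ∀ t, Measurable (Y t))
    (hle : ∀ t, ∀ᵐ ω ∂μ, Z t ω ≤ Y t ω)
    (F : ℝ → ℝ)
    (hconvZ : ∀ s, Tendsto (fun t => (μ {ω | Z t ω ≤ s}).toReal) atTop (nhds (F s)))
    (hconvY : ∀ s, Tendsto (fun t => (μ {ω | Y t ω ≤ s}).toReal) atTop (nhds (F s)))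
    (hFtop : Tendsto F atTop (nhds 1)) (hFbot : Tendsto F atBot (nhds 0))
    {ε' : ℝ} (hε' : 0 < ε') :
    Tendsto (fun t => (μ {ω | ε' ≤ Y t ω - Z t ω}).toReal) atTop (nhds 0) := by
  apply SD_tendsto_zero (fun t => ENNReal.toReal_nonneg)
  intro δ hδ
  have hFmono : Monotone F := by
    intro x y hxy
    exact le_of_tendsto_of_tendsto' (hconvZ x) (hconvZ y)
      (fun t => SD_mono μ (fun ω hω => le_trans hω hxy))
  obtain ⟨a, ha⟩ := (SD_ev_close hFbot (by linarith : (0:ℝ) < δ/6)).exists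
  obtain ⟨b0, hb0⟩ := (SD_ev_close hFtop (by linarith : (0:ℝ) < δ/6)).exists
  rw [sub_zero] at ha
  have ha' : F a ≤ δ/6 := le_of_lt (lt_of_abs_lt ha)
  set b := max b0 (a + 1) with hbdef
  have hab : a + 1 ≤ b := le_max_right _ _
  have hFb : 1 - δ/6 ≤ F b := by
    have h1 := (abs_sub_lt_iff.mp hb0).2
    have h2 := hFmono (le_max_left b0 (a + 1))
    linarith
  set n := ⌈(b - a) / ε'⌉₊ with hndef
  have hn1 : 0 < n := Nat.ceil_pos.mpr (div_pos (by linarith) hε')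
  have hnR : (0:ℝ) < n := by exact_mod_cast hn1
  have hsn : b ≤ a + n * ε' := by
    have h := Nat.le_ceil ((b - a) / ε')
    have h2 : (b - a) / ε' * ε' ≤ (n : ℝ) * ε' :=
      mul_le_mul_of_nonneg_right h (le_of_lt hε')
    rw [div_mul_cancel₀ _ (ne_of_gt hε')] at h2
    linarith
  set s : ℕ → ℝ := fun i => a + i * ε' with hsdef
  have E1 : ∀ᶠ t in atTop, (μ {ω | Z t ω ≤ a}).toReal ≤ F a + δ/6 :=
    (SD_ev_close (hconvZ a) (show (0:ℝ) < δ/6 by linarith)).mono (fun t ht => by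
      have := (abs_sub_lt_iff.mp ht).1; linarith)
  have E2 : ∀ᶠ t in atTop, F (s n) - δ/6 ≤ (μ {ω | Z t ω ≤ s n}).toReal :=
    (SD_ev_close (hconvZ (s n)) (show (0:ℝ) < δ/6 by linarith)).mono (fun t ht => by
      have := (abs_sub_lt_iff.mp ht).2; linarith)
  have E3 : ∀ᶠ t in atTop, ∀ i ∈ Finset.range n,
      (μ {ω | Z t ω ≤ s (i + 1)}).toReal ≤ F (s (i + 1)) + δ/(6*n) ∧
      F (s (i + 1)) - δ/(6*n) ≤ (μ {ω | Y t ω ≤ s (i + 1)}).toReal := by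
    rw [eventually_all_finset]
    intro i _
    have hpos : 0 < δ/(6*n) := by positivity
    filter_upwards [SD_ev_close (hconvZ (s (i + 1))) hpos,
      SD_ev_close (hconvY (s (i + 1))) hpos] with t h1 h2
    exact ⟨by have := (abs_sub_lt_iff.mp h1).1; linarith,
           by have := (abs_sub_lt_iff.mp h2).2; linarith⟩
  filter_upwards [E1, E2, E3] with t h1 h2 h3
  have hsub : {ω | ε' ≤ Y t ω - Z t ω} ⊆
      {ω | Z t ω ≤ a} ∪ ({ω | Z t ω ≤ s n}ᶜ ∪
        ⋃ i ∈ Finset.range n, ({ω | Z t ω ≤ s (i + 1)} \ {ω | Y t ω ≤ s (i + 1)})) := by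
    intro ω hω
    simp only [mem_setOf_eq] at hω
    by_cases hA : Z t ω ≤ a
    · exact Or.inl hA
    by_cases hB : Z t ω ≤ s n
    · right; right
      push_neg at hA
      obtain ⟨i, hi, hlt, hle2⟩ := SD_grid a ε' (Z t ω) n hA hB
      refine mem_biUnion (Finset.mem_range.mpr hi) ⟨hle2, ?_⟩
      simp only [mem_setOf_eq, not_le]
      have : s (i + 1) = a + ((i:ℝ) + 1) * ε' := by simp only [hsdef]; push_cast; ring
      rw [this]
      linarith
    · exact Or.inr (Or.inl hB)
  have hMZn : MeasurableSet {ω | Z t ω ≤ s n} := measurableSet_le (hmZ t) measurable_const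
  calc (μ {ω | ε' ≤ Y t ω - Z t ω}).toReal
      ≤ (μ ({ω | Z t ω ≤ a} ∪ ({ω | Z t ω ≤ s n}ᶜ ∪
          ⋃ i ∈ Finset.range n, ({ω | Z t ω ≤ s (i + 1)} \ {ω | Y t ω ≤ s (i + 1)})))).toReal :=
        SD_mono μ hsub
    _ ≤ (μ {ω | Z t ω ≤ a}).toReal + (μ ({ω | Z t ω ≤ s n}ᶜ ∪
          ⋃ i ∈ Finset.range n, ({ω | Z t ω ≤ s (i + 1)} \ {ω | Y t ω ≤ s (i + 1)}))).toReal :=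
        SD_union μ _ _
    _ ≤ (μ {ω | Z t ω ≤ a}).toReal + ((μ {ω | Z t ω ≤ s n}ᶜ).toReal +
          (μ (⋃ i ∈ Finset.range n,
            ({ω | Z t ω ≤ s (i + 1)} \ {ω | Y t ω ≤ s (i + 1)}))).toReal) :=
        add_le_add le_rfl (SD_union μ _ _)
    _ ≤ (μ {ω | Z t ω ≤ a}).toReal + ((μ {ω | Z t ω ≤ s n}ᶜ).toReal +
          ∑ i ∈ Finset.range n,
            (μ ({ω | Z t ω ≤ s (i + 1)} \ {ω | Y t ω ≤ s (i + 1)})).toReal) :=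
        add_le_add le_rfl (add_le_add le_rfl (SD_biUnion μ n _))
    _ ≤ δ := by
        have hterm1 : (μ {ω | Z t ω ≤ a}).toReal ≤ δ/3 := by linarith
        have hterm2 : (μ {ω | Z t ω ≤ s n}ᶜ).toReal ≤ δ/3 := by
          rw [SD_compl μ hMZn]
          have hFsn : 1 - δ/6 ≤ F (s n) := le_trans hFb (hFmono hsn)
          linarith
        have hterm3 : ∑ i ∈ Finset.range n,
            (μ ({ω | Z t ω ≤ s (i + 1)} \ {ω | Y t ω ≤ s (i + 1)})).toReal ≤ δ/3 := by
          have hsum : ∀ i ∈ Finset.range n,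
              (μ ({ω | Z t ω ≤ s (i + 1)} \ {ω | Y t ω ≤ s (i + 1)})).toReal ≤ δ/(3*n) := by
            intro i hi
            obtain ⟨hZi, hYi⟩ := h3 i hi
            have hd := SD_diff μ (A := {ω | Z t ω ≤ s (i + 1)})
              (B := {ω | Y t ω ≤ s (i + 1)})
              (measurableSet_le (hmY t) measurable_const)
              ((hle t).mono (fun ω hω hmem => le_trans hω hmem))
            have : δ/(6*n) + δ/(6*n) = δ/(3*n) := by ring
            linarith
          calc ∑ i ∈ Finset.range n,
              (μ ({ω | Z t ω ≤ s (i + 1)} \ {ω | Y t ω ≤ s (i + 1)})).toReal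
              ≤ ∑ _i ∈ Finset.range n, δ/(3*n) := Finset.sum_le_sum hsum
            _ = n * (δ/(3*n)) := by rw [Finset.sum_const, Finset.card_range]; ring
            _ = δ/3 := by field_simp
        linarith

private lemma SD_mono_ae {Ω : Type*} [MeasurableSpace Ω] (μ : Measure Ω) [IsFiniteMeasure μ]
    {A B : Set Ω} (h : ∀ᵐ ω ∂μ, ω ∈ A → ω ∈ B) : (μ A).toReal ≤ (μ B).toReal := by
  refine ENNReal.toReal_mono (measure_ne_top μ _) (measure_mono_ae ?_)
  rw [ae_le_set]
  apply measure_mono_null (fun ω hω => ?_) (ae_iff.mp h)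
  exact fun hi => hω.2 (hi hω.1)


/-- Abstract slow-decorrelation argument: if `h⁽¹⁾_t = h⁽²⁾_t + ε_t h⁽³⁾_t − X_t` with
`X_t ≥ 0` a.s., `ε_t → 0` deterministically, all three of `h⁽¹⁾, h⁽²⁾, h⁽³⁾` converge in
distribution to the same law `D` with continuous CDF, and `h⁽³⁾` is tight, then `X_t → 0`
in probability and hence `h⁽¹⁾_t − h⁽²⁾_t → 0` in probability. -/
theorem slow_decorrelation_abstract
    {Ω : Type*} [MeasurableSpace Ω] (μ : Measure Ω) [IsProbabilityMeasure μ]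
    (h1 h2 h3 X : ℕ → Ω → ℝ)
    (hmeas1 : ∀ t, Measurable (h1 t)) (hmeas2 : ∀ t, Measurable (h2 t))
    (hmeas3 : ∀ t, Measurable (h3 t)) (hmeasX : ∀ t, Measurable (X t))
    (ε : ℕ → ℝ) (hε : Tendsto ε atTop (nhds 0))
    (hdecomp : ∀ t, ∀ᵐ ω ∂μ, h1 t ω = h2 t ω + ε t * h3 t ω - X t ω)
    (hXnonneg : ∀ t, ∀ᵐ ω ∂μ, 0 ≤ X t ω)
    (D : Measure ℝ) [IsProbabilityMeasure D]
    (hDcont : ∀ s : ℝ, ContinuousAt (fun x => (D (Iic x)).toReal) s)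
    (hconv1 : ∀ s : ℝ, Tendsto (fun t => (μ {ω | h1 t ω ≤ s}).toReal)
        atTop (nhds ((D (Iic s)).toReal)))
    (hconv2 : ∀ s : ℝ, Tendsto (fun t => (μ {ω | h2 t ω ≤ s}).toReal)
        atTop (nhds ((D (Iic s)).toReal)))
    (hconv3 : ∀ s : ℝ, Tendsto (fun t => (μ {ω | h3 t ω ≤ s}).toReal)
        atTop (nhds ((D (Iic s)).toReal)))
    (htight : ∀ δ > 0, ∃ K : ℝ, ∀ t, (μ {ω | K ≤ |h3 t ω|}).toReal ≤ δ) :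
    (∀ ε' > 0, Tendsto (fun t => (μ {ω | ε' ≤ |X t ω|}).toReal) atTop (nhds 0)) ∧
    (∀ ε' > 0, Tendsto (fun t => (μ {ω | ε' ≤ |h1 t ω - h2 t ω|}).toReal)
        atTop (nhds 0)) := by
  
  set F : ℝ → ℝ := fun s => (D (Iic s)).toReal with hF
  -- limits of F at ±∞
  have hFtop : Tendsto F atTop (nhds 1) := by
    have := (ENNReal.tendsto_toReal (by simp : D univ ≠ ⊤)).comp (tendsto_measure_Iic_atTop D)
    simpa [hF, Function.comp_def, measure_univ] using this
  have hIci : Tendsto (fun x : ℝ => (D (Ici x)).toReal) atBot (nhds 1) := by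
    have := (ENNReal.tendsto_toReal (by simp : D univ ≠ ⊤)).comp (tendsto_measure_Ici_atBot D)
    simpa [Function.comp_def, measure_univ] using this
  have hFbot : Tendsto F atBot (nhds 0) := by
    have hub : ∀ x : ℝ, F x ≤ 1 - (D (Ici (x + 1))).toReal := by
      intro x
      have hcompl : (D (Ioi x)).toReal = 1 - F x := by
        rw [← Set.compl_Iic, SD_compl D measurableSet_Iic]
      have hmono : (D (Ici (x + 1))).toReal ≤ (D (Ioi x)).toReal :=
        SD_mono D (fun y hy => lt_of_lt_of_le (by linarith : x < x + 1) hy)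
      linarith
    have hlim : Tendsto (fun x : ℝ => 1 - (D (Ici (x + 1))).toReal) atBot (nhds 0) := by
      have hsh : Tendsto (fun x : ℝ => x + 1) atBot atBot :=
        tendsto_atBot_add_const_right atBot 1 tendsto_id
      have := (hIci.comp hsh).const_sub 1
      simpa using this
    exact tendsto_of_tendsto_of_tendsto_of_le_of_le tendsto_const_nhds hlim
      (fun x => ENNReal.toReal_nonneg) hub
  -- convergence in distribution of Y = h2 + ε h3
  set Y : ℕ → Ω → ℝ := fun t ω => h2 t ω + ε t * h3 t ω with hY
  have hmY : ∀ t, Measurable (Y t) := fun t => (hmeas2 t).add (measurable_const.mul (hmeas3 t))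
  have hconvY : ∀ s : ℝ, Tendsto (fun t => (μ {ω | Y t ω ≤ s}).toReal) atTop (nhds (F s)) := by
    intro s
    rw [Metric.tendsto_nhds]
    intro δ hδ
    obtain ⟨η, hη, hcont⟩ := Metric.continuousAt_iff.mp (hDcont s) (δ/3) (by linarith)
    obtain ⟨K, hK⟩ := htight (δ/3) (by linarith)
    set K' := max K 1 with hK'def
    have hK'pos : (0:ℝ) < K' := lt_of_lt_of_le one_pos (le_max_right _ _)
    have hKsub : ∀ t, (μ {ω | K' ≤ |h3 t ω|}).toReal ≤ δ/3 := fun t =>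
      le_trans (SD_mono μ (fun ω hω => le_trans (le_max_left K 1) hω)) (hK t)
    have hd1 : dist (s + η/2) s < η := by
      rw [Real.dist_eq]
      have he : s + η/2 - s = η/2 := by ring
      rw [he, abs_of_pos (by linarith)]
      linarith
    have hFup : F (s + η/2) - F s < δ/3 := by
      have h := hcont hd1
      rw [Real.dist_eq] at h
      exact (abs_sub_lt_iff.mp h).1
    have hd2 : dist (s - η/2) s < η := by
      rw [Real.dist_eq]
      have he : s - η/2 - s = -(η/2) := by ring
      rw [he, abs_neg, abs_of_pos (by linarith)]
      linarith
    have hFdn : F s - F (s - η/2) < δ/3 := by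
      have h := hcont hd2
      rw [Real.dist_eq] at h
      exact (abs_sub_lt_iff.mp h).2
    have hεev : ∀ᶠ t in atTop, |ε t| < (η/2) / K' := by
      have := SD_ev_close hε (show (0:ℝ) < (η/2)/K' by positivity)
      simpa using this
    filter_upwards [hεev, SD_ev_close (hconv2 (s + η/2)) (show (0:ℝ) < δ/3 by linarith),
      SD_ev_close (hconv2 (s - η/2)) (show (0:ℝ) < δ/3 by linarith)] with t hεt hup hdn
    rw [Real.dist_eq, abs_sub_lt_iff]
    have hbd : ∀ ω, |h3 t ω| < K' → |ε t * h3 t ω| ≤ η/2 := by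
      intro ω hc
      rw [abs_mul]
      calc |ε t| * |h3 t ω| ≤ ((η/2)/K') * K' :=
            mul_le_mul (le_of_lt hεt) (le_of_lt hc) (abs_nonneg _) (by positivity)
        _ = η/2 := div_mul_cancel₀ _ (ne_of_gt hK'pos)
    constructor
    · have hsub : {ω | Y t ω ≤ s} ⊆ {ω | h2 t ω ≤ s + η/2} ∪ {ω | K' ≤ |h3 t ω|} := by
        intro ω hω
        by_cases hc : K' ≤ |h3 t ω|
        · exact Or.inr hc
        · left
          push_neg at hc
          have habs := hbd ω hc
          have h1' := neg_le_of_abs_le habs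
          have hYω : h2 t ω + ε t * h3 t ω ≤ s := hω
          simp only [mem_setOf_eq]
          linarith
      have hchain := le_trans (SD_mono μ hsub) (SD_union μ _ _)
      have hu1 := (abs_sub_lt_iff.mp hup).1
      linarith [hKsub t]
    · have hsub2 : {ω | h2 t ω ≤ s - η/2} ⊆ {ω | Y t ω ≤ s} ∪ {ω | K' ≤ |h3 t ω|} := by
        intro ω hω
        by_cases hc : K' ≤ |h3 t ω|
        · exact Or.inr hc
        · left
          push_neg at hc
          have habs := hbd ω hc
          have h1' := le_of_abs_le habs
          simp only [mem_setOf_eq] at hω ⊢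
          simp only [hY]
          linarith
      have hchain := le_trans (SD_mono μ hsub2) (SD_union μ _ _)
      have hd2 := (abs_sub_lt_iff.mp hdn).2
      linarith [hKsub t]
  -- h1 ≤ Y a.s.
  have hle : ∀ t, ∀ᵐ ω ∂μ, h1 t ω ≤ Y t ω := by
    intro t
    filter_upwards [hdecomp t, hXnonneg t] with ω hd hx
    simp only [hY]
    linarith
  -- Part 1
  have P1 : ∀ ε' > 0, Tendsto (fun t => (μ {ω | ε' ≤ |X t ω|}).toReal) atTop (nhds 0) := by
    intro ε' hε'
    have hsand := SD_sandwich μ h1 Y hmeas1 hmY hle F hconv1 hconvY hFtop hFbot hε'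
    refine Tendsto.congr (fun t => ?_) hsand
    congr 1
    apply measure_congr
    rw [Filter.eventuallyEq_set]
    filter_upwards [hdecomp t, hXnonneg t] with ω hd hx
    simp only [mem_setOf_eq, hY]
    rw [abs_of_nonneg hx]
    constructor <;> intro h <;> linarith
  refine ⟨P1, ?_⟩
  -- Part 2
  intro ε' hε'
  apply SD_tendsto_zero (fun t => ENNReal.toReal_nonneg)
  intro δ hδ
  obtain ⟨K, hK⟩ := htight (δ/2) (by linarith)
  set K' := max K 1 with hK'def
  have hK'pos : (0:ℝ) < K' := lt_of_lt_of_le one_pos (le_max_right _ _)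
  have hKsub : ∀ t, (μ {ω | K' ≤ |h3 t ω|}).toReal ≤ δ/2 := fun t =>
    le_trans (SD_mono μ (fun ω hω => le_trans (le_max_left K 1) hω)) (hK t)
  have hεev : ∀ᶠ t in atTop, |ε t| < (ε'/2) / K' := by
    have := SD_ev_close hε (show (0:ℝ) < (ε'/2)/K' by positivity)
    simpa using this
  have hXev : ∀ᶠ t in atTop, (μ {ω | ε'/2 ≤ |X t ω|}).toReal ≤ δ/2 := by
    have := SD_ev_close (P1 (ε'/2) (by linarith)) (show (0:ℝ) < δ/2 by linarith)
    filter_upwards [this] with t ht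
    rw [sub_zero, abs_of_nonneg ENNReal.toReal_nonneg] at ht
    linarith
  filter_upwards [hεev, hXev] with t hεt hXt
  have hincl : ∀ᵐ ω ∂μ, ω ∈ {ω | ε' ≤ |h1 t ω - h2 t ω|} →
      ω ∈ ({ω | K' ≤ |h3 t ω|} ∪ {ω | ε'/2 ≤ |X t ω|}) := by
    filter_upwards [hdecomp t] with ω hd hω
    have hω' : ε' ≤ |h1 t ω - h2 t ω| := hω
    by_cases hc : K' ≤ |h3 t ω|
    · exact Or.inl hc
    · right
      push_neg at hc
      show ε'/2 ≤ |X t ω|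
      by_contra hX
      push_neg at hX
      have habs : |ε t * h3 t ω| ≤ ε'/2 := by
        rw [abs_mul]
        calc |ε t| * |h3 t ω| ≤ ((ε'/2)/K') * K' :=
              mul_le_mul (le_of_lt hεt) (le_of_lt hc) (abs_nonneg _) (by positivity)
          _ = ε'/2 := div_mul_cancel₀ _ (ne_of_gt hK'pos)
      have hdiff : h1 t ω - h2 t ω = ε t * h3 t ω - X t ω := by linarith
      have : |h1 t ω - h2 t ω| ≤ |ε t * h3 t ω| + |X t ω| := by
        rw [hdiff]
        exact (abs_sub _ _).trans (by rfl)
      linarith [abs_lt.mp hX]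
  calc (μ {ω | ε' ≤ |h1 t ω - h2 t ω|}).toReal
      ≤ (μ ({ω | K' ≤ |h3 t ω|} ∪ {ω | ε'/2 ≤ |X t ω|})).toReal := SD_mono_ae μ hincl
    _ ≤ (μ {ω | K' ≤ |h3 t ω|}).toReal + (μ {ω | ε'/2 ≤ |X t ω|}).toReal := SD_union μ _ _
    _ ≤ δ := by linarith [hKsub t]
end
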